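/- arXiv:math/0006131 — 4 statements merged into one kernel-verified Lean document; each statement's English description precedes it below -/
import Mathlib

section
/- Let L be a finite rank-connected lattice in which every rank set R_i with 0 < i < r(⊤) contains at least two elements. If x is a doubly irreducible element of L, with unique lower cover z (the unique element covered by x) and unique upper cover y (the unique element covering x), then neither y nor z is doubly irreducible in L. -/
/-! Common definitions: finite lattices, rank functions, rank-connectivity,
interval-connectivity, dismantlability, lexicographic shellability. -/

section Defs

variable (L : Type*) [Lattice L]

/-- `r` is a rank function for the bounded lattice `L`: `r ⊥ = 0` and `r`
increases by exactly one along covering relations.  For a finite lattice this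
is equivalent to all maximal chains from `⊥` to `⊤` having the same length,
and then `r x` is the length of any maximal chain from `⊥` to `x`. -/
def IsRankFunction [OrderBot L] (r : L → ℕ) : Prop :=
  r ⊥ = 0 ∧ ∀ a b : L, a ⋖ b → r b = r a + 1

/-- The Hasse diagram of `L` restricted to a set `S`: the (simple) graph on `S`
whose edges are the covering relations of `L` between elements of `S`. -/
def hasseGraph (S : Set L) : SimpleGraph S where
  Adj a b := ((a : L) ⋖ (b : L)) ∨ ((b : L) ⋖ (a : L))
  symm := ⟨fun a b h => Or.symm h⟩
  loopless := ⟨fun a h => by rcases h with h | h <;> exact h.ne rfl⟩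

/-- `L` is rank-connected: it is ranked, and for each `i < r ⊤` the bipartite
graph on the elements of ranks `i` and `i + 1`, with the covering relations as
edges, is connected. -/
def RankConnected [BoundedOrder L] : Prop :=
  ∃ r : L → ℕ, IsRankFunction L r ∧
    ∀ i : ℕ, i < r (⊤ : L) →
      (hasseGraph L {x : L | r x = i ∨ r x = i + 1}).Connected

/-- `L` is interval-connected: it is ranked, and for every pair `x ≤ y` with
`r y ≥ r x + 2` the Hasse diagram of the open interval `(x, y)` (edges being
the covering relations of `L` between its elements) is connected. -/
def IntervalConnected [BoundedOrder L] : Prop :=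
  ∃ r : L → ℕ, IsRankFunction L r ∧
    ∀ x y : L, x ≤ y → r x + 2 ≤ r y →
      (hasseGraph L {z : L | x < z ∧ z < y}).Connected

/-- A finite lattice `L` with `n` elements is dismantlable if there is a chain
`L₁ ⊆ L₂ ⊆ ⋯ ⊆ Lₙ = L` of sublattices of `L` with `|Lᵢ| = i`. -/
def Dismantlable : Prop :=
  ∃ C : ℕ → Set L,
    (∀ i : ℕ, 1 ≤ i → i ≤ Nat.card L → IsSublattice (C i) ∧ (C i).ncard = i) ∧
    (∀ i j : ℕ, i ≤ j → C i ⊆ C j) ∧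
    C (Nat.card L) = Set.univ

variable {L}

/-- `l` is an unrefinable (i.e. saturated) chain which is rising with respect
to the edge labelling `f`: consecutive entries are covering pairs and the
labels of consecutive covering pairs weakly increase. -/
def RisingChain (f : L → L → ℝ) (l : List L) : Prop :=
  l.Chain' (· ⋖ ·) ∧
    (l.zip l.tail).Chain' (fun p q => f p.1 p.2 ≤ f q.1 q.2)

/-- `f` (viewed as a labelling of the covering relations of `L` by reals) is an
L-labelling witnessing lexicographic shellability of the interval `[a, b]`:
(1) every subinterval `[x, y]` has a unique rising unrefinable chain from `x`
to `y`, and (2) the rising chain lexicographically precedes all others: if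
`z ∈ [x, y]` covers `x` and `z` is not the second element `x₁` of the rising
chain, then `f x x₁ < f x z`. -/
def IsLexShellingOn (a b : L) (f : L → L → ℝ) : Prop :=
  (∀ x y : L, a ≤ x → x ≤ y → y ≤ b →
      ∃! l : List L,
        l.head? = some x ∧ l.getLast? = some y ∧ RisingChain f l) ∧
  (∀ x y : L, a ≤ x → x ≤ y → y ≤ b →
      ∀ l : List L, l.head? = some x → l.getLast? = some y → RisingChain f l →
        ∀ x₁ : L, l[1]? = some x₁ →
          ∀ z : L, x ⋖ z → z ≤ y → z ≠ x₁ → f x x₁ < f x z)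

variable (L)

/-- `L` is lexicographically shellable. -/
def LexShellable [BoundedOrder L] : Prop :=
  ∃ f : L → L → ℝ, IsLexShellingOn (⊥ : L) (⊤ : L) f

variable {L}

/-- `x` is join-irreducible: it covers exactly one element. -/
def JoinIrred (x : L) : Prop := ∃! z : L, z ⋖ x

/-- `x` is meet-irreducible: it is covered by exactly one element. -/
def MeetIrred (x : L) : Prop := ∃! y : L, x ⋖ y

/-- `x` is doubly irreducible: both join- and meet-irreducible. -/
def DoublyIrred (x : L) : Prop := JoinIrred x ∧ MeetIrred x

/-- `w` is a corner of `x`: `x` is doubly irreducible and there are `z`, `y`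
such that `x` and `w` both cover `z` and are both covered by `y`. -/
def IsCornerOf (w x : L) : Prop :=
  DoublyIrred x ∧ w ≠ x ∧ ∃ z y : L, z ⋖ x ∧ z ⋖ w ∧ x ⋖ y ∧ w ⋖ y

end Defs


section AuxProof

variable {L : Type*} [Lattice L] [Finite L]

lemma myRank_strictMono (r : L → ℕ) (hr : ∀ a b : L, a ⋖ b → r b = r a + 1) :
    ∀ a b : L, a < b → r a < r b := by
  classical
  letI := Fintype.ofFinite L
  letI : LocallyFiniteOrder L := Fintype.toLocallyFiniteOrder
  have wf : WellFoundedGT L := Finite.to_wellFoundedGT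
  intro a
  refine wf.wf.induction (C := fun a => ∀ b : L, a < b → r a < r b) a ?_
  intro a ih b hab
  obtain ⟨c, hac, hcb⟩ := hab.exists_covby_le
  rcases hcb.lt_or_eq with h | rfl
  · have h1 := ih c hac.lt b h
    have h2 := hr a c hac
    omega
  · have h2 := hr a c hac
    omega

lemma walk_pair {V : Type*} (G : SimpleGraph V) (a b : V)
    (ha : ∀ u, G.Adj a u → u = b) (hb : ∀ u, G.Adj b u → u = a) :
    ∀ {u v : V}, G.Walk u v → (u = a ∨ u = b) → (v = a ∨ v = b) := by
  intro u v w
  induction w with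
  | nil => exact id
  | cons h p ih =>
    intro hu
    apply ih
    rcases hu with rfl | rfl
    · right; exact ha _ h
    · left; exact hb _ h

lemma key_contra (r : L → ℕ) (hr : ∀ a b : L, a ⋖ b → r b = r a + 1)
    (a b : L)
    (hc : (hasseGraph L {v : L | r v = r a ∨ r v = r a + 1}).Connected)
    (hab : a ⋖ b)
    (hA : ∀ u : L, a ⋖ u → u = b) (hB : ∀ u : L, u ⋖ b → u = a)
    (w : L) (hw : r w = r a ∨ r w = r a + 1) (hwa : w ≠ a) (hwb : w ≠ b) :
    False := by
  set S : Set L := {v : L | r v = r a ∨ r v = r a + 1} with hS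
  have hrb : r b = r a + 1 := hr a b hab
  have haS : a ∈ S := Or.inl rfl
  have hbS : b ∈ S := Or.inr hrb
  have hwS : w ∈ S := hw
  set G := hasseGraph L S with hG
  have ha' : ∀ u : S, G.Adj ⟨a, haS⟩ u → u = ⟨b, hbS⟩ := by
    rintro ⟨u, hu⟩ (h | h)
    · exact Subtype.ext (hA u h)
    · have h1 := hr u a h
      rcases hu with h2 | h2 <;> omega
  have hb' : ∀ u : S, G.Adj ⟨b, hbS⟩ u → u = ⟨a, haS⟩ := by
    rintro ⟨u, hu⟩ (h | h)
    · have h1 := hr b u h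
      rcases hu with h2 | h2 <;> omega
    · exact Subtype.ext (hB u h)
  obtain ⟨p⟩ := hc.preconnected ⟨a, haS⟩ ⟨w, hwS⟩
  rcases walk_pair G ⟨a, haS⟩ ⟨b, hbS⟩ ha' hb' p (Or.inl rfl) with h | h
  · exact hwa (congrArg Subtype.val h)
  · exact hwb (congrArg Subtype.val h)

end AuxProof

/-- In a finite rank-connected lattice all of whose
intermediate rank sets have at least two elements, the unique lower cover and
the unique upper cover of a doubly irreducible element are not themselves
doubly irreducible. -/
theorem covers_of_doublyIrred_not_doublyIrred
    (L : Type*) [Lattice L] [Finite L] [BoundedOrder L]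
    (r : L → ℕ) (hr : IsRankFunction L r)
    (hconn : ∀ i : ℕ, i < r (⊤ : L) →
      (hasseGraph L {v : L | r v = i ∨ r v = i + 1}).Connected)
    (hbig : ∀ i : ℕ, 0 < i → i < r (⊤ : L) → 2 ≤ {v : L | r v = i}.ncard)
    (x z y : L) (hx : DoublyIrred x) (hz : z ⋖ x) (hy : x ⋖ y) :
    ¬ DoublyIrred y ∧ ¬ DoublyIrred z := by
  obtain ⟨hr0, hrc⟩ := hr
  have hmono := myRank_strictMono r hrc
  have hxtop : r x < r (⊤ : L) := hmono x ⊤ (lt_of_lt_of_le hy.lt le_top)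
  have hxpos : 0 < r x := by have := hrc z x hz; omega
  have hrx : r x = r z + 1 := hrc z x hz
  have hry : r y = r x + 1 := hrc x y hy
  constructor
  · rintro ⟨hJy, _⟩
    -- pair (x, y) on ranks r x, r x + 1
    obtain ⟨w, hwmem, hwx⟩ :=
      Set.exists_ne_of_one_lt_ncard (s := {v : L | r v = r x}) (hbig (r x) hxpos hxtop) x
    refine key_contra r hrc x y (hconn (r x) hxtop) hy
      (fun u hu => hx.2.unique hu hy)
      (fun u hu => hJy.unique hu hy) w (Or.inl hwmem) hwx ?_
    intro hwy
    rw [hwy] at hwmem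
    simp only [Set.mem_setOf_eq] at hwmem
    omega
  · rintro ⟨_, hMz⟩
    -- pair (z, x) on ranks r z, r z + 1
    have hztop : r z < r (⊤ : L) := by omega
    obtain ⟨w, hwmem, hwx⟩ :=
      Set.exists_ne_of_one_lt_ncard (s := {v : L | r v = r x}) (hbig (r x) hxpos hxtop) x
    simp only [Set.mem_setOf_eq] at hwmem
    refine key_contra r hrc z x (hconn (r z) hztop) hz
      (fun u hu => hMz.unique hu hz)
      (fun u hu => hx.1.unique hu hz) w (Or.inr (by omega)) ?_ hwx
    intro hwz
    rw [hwz] at hwmem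
    omega
end

section
/- Let L be a finite, rank-connected, dismantlable lattice with r(⊤) ≥ 2 in which every rank set R_i with 0 < i < r(⊤) contains at least two elements. Then L contains a doubly irreducible element that has a corner. -/
namespace CornerAux

structure IsCrown {L : Type*} [Lattice L] {q : ℕ} (a b : ZMod q → L) : Prop where
  le1 : ∀ i, a i ≤ b i
  le2 : ∀ i, a (i + 1) ≤ b i
  h3 : ∀ i j, a i ≤ b j → j = i ∨ j = i - 1
  h4 : ∀ i j, a i ≤ a j → i = j
  h5 : ∀ i j, b i ≤ b j → i = j
  h6 : ∀ i j, ¬ b i ≤ a j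

lemma zmod_one_ne_zero {q : ℕ} (hq : 3 ≤ q) : (1 : ZMod q) ≠ 0 := by
  haveI : NeZero q := ⟨by omega⟩
  intro h
  have h2 := (ZMod.natCast_eq_zero_iff 1 q).mp (by exact_mod_cast h)
  have := Nat.le_of_dvd (by norm_num) h2
  omega

lemma zmod_two_ne_zero {q : ℕ} (hq : 3 ≤ q) : (2 : ZMod q) ≠ 0 := by
  haveI : NeZero q := ⟨by omega⟩
  intro h
  have h2 := (ZMod.natCast_eq_zero_iff 2 q).mp (by exact_mod_cast h)
  have := Nat.le_of_dvd (by norm_num) h2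
  omega

variable {L : Type*} [Lattice L] [Finite L]

lemma not_dismantlable_of_crown {q : ℕ} (hq : 3 ≤ q) (a b : ZMod q → L)
    (hcr : IsCrown a b) (hd : Dismantlable L) : False := by
  classical
  haveI : NeZero q := ⟨by omega⟩
  have hone := zmod_one_ne_zero hq
  have htwo := zmod_two_ne_zero hq
  obtain ⟨C, hC, hmono, htopC⟩ := hd
  set n := Nat.card L with hn
  have hn1 : 1 ≤ n := by
    have hne : Nonempty L := ⟨a 0⟩
    have hpos : 0 < Nat.card L := Nat.card_pos
    omega
  -- main downward induction
  have key : ∀ k, 1 ≤ k → k ≤ n → ∀ a b : ZMod q → L, IsCrown a b →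
      (∀ t, a t ∈ C k) → (∀ t, b t ∈ C k) → False := by
    intro k
    induction k using Nat.strong_induction_on with
    | _ k IH =>
      intro hk1 hkn a b hc ha hb
      rcases eq_or_lt_of_le hk1 with h1 | hk2
      · -- k = 1
        subst h1
        obtain ⟨e, he⟩ := Set.ncard_eq_one.mp (by rw [(hC 1 le_rfl (by omega)).2])
        have h01 : a 0 = a 1 := by
          have e0 : a 0 ∈ C 1 := ha 0
          have e1 : a 1 ∈ C 1 := ha 1
          rw [he] at e0 e1
          rw [Set.mem_singleton_iff.mp e0, Set.mem_singleton_iff.mp e1]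
        have := hc.h4 0 1 (le_of_eq h01)
        exact hone this.symm
      · -- k ≥ 2
        have hk2' : 2 ≤ k := hk2
        have hsub : C (k - 1) ⊆ C k := hmono _ _ (by omega)
        have hck : (C k).ncard = k := (hC k (by omega) hkn).2
        have hck1 : (C (k - 1)).ncard = k - 1 := (hC (k - 1) (by omega) (by omega)).2
        have hslat : IsSublattice (C (k - 1)) := (hC (k - 1) (by omega) (by omega)).1
        have hdiff : (C k \ C (k - 1)).ncard = 1 := by
          rw [Set.ncard_diff hsub (Set.toFinite _), hck, hck1]; omega
        obtain ⟨x₀, hx₀⟩ := Set.ncard_eq_one.mp hdiff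
        have hmem : ∀ v, v ∈ C k → v ≠ x₀ → v ∈ C (k - 1) := by
          intro v hv hne
          by_contra hcon
          have hv2 : v ∈ C k \ C (k - 1) := ⟨hv, hcon⟩
          rw [hx₀] at hv2
          exact hne (Set.mem_singleton_iff.mp hv2)
        have hane : ∀ s t : ZMod q, s ≠ t → a s ≠ a t := by
          intro s t hst heq
          exact hst (hc.h4 s t (le_of_eq heq))
        have habne : ∀ s t : ZMod q, b s ≠ a t := by
          intro s t heq
          exact hc.h6 s t (le_of_eq heq)
        have hbne : ∀ s t : ZMod q, s ≠ t → b s ≠ b t := by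
          intro s t hst heq
          exact hst (hc.h5 s t (le_of_eq heq))
        by_cases hA : ∃ t, a t = x₀
        · obtain ⟨t₀, ht₀⟩ := hA
          set w : L := b (t₀ - 1) ⊓ b t₀ with hw
          have hbmem : ∀ s, b s ∈ C (k - 1) := fun s =>
            hmem _ (hb s) (ht₀ ▸ habne s t₀)
          have hwmem : w ∈ C (k - 1) := hslat.infClosed (hbmem _) (hbmem _)
          have hat0w : a t₀ ≤ w := le_inf (by
              have h := hc.le2 (t₀ - 1)
              simpa using h) (hc.le1 t₀)
          set a' : ZMod q → L := Function.update a t₀ w with ha'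
          have ha'val : ∀ s, s ≠ t₀ → a' s = a s := fun s hs => Function.update_of_ne hs _ _
          have ha't : a' t₀ = w := Function.update_self _ _ _
          have hcr' : IsCrown a' b := by
            constructor
            · intro s
              by_cases hs : s = t₀
              · rw [hs, ha't]; exact inf_le_right
              · rw [ha'val s hs]; exact hc.le1 s
            · intro s
              by_cases hs : s + 1 = t₀
              · have hs' : s = t₀ - 1 := by rw [← hs]; ring
                rw [hs, ha't, hs']
                exact inf_le_left
              · rw [ha'val _ hs]; exact hc.le2 s
            · intro s t hst
              by_cases hs : s = t₀
              · rw [hs, ha't] at hst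
                have := hc.h3 t₀ t (le_trans hat0w hst)
                rw [hs]; exact this
              · rw [ha'val s hs] at hst; exact hc.h3 _ _ hst
            · intro s t hst
              by_cases hs : s = t₀ <;> by_cases ht : t = t₀
              · rw [hs, ht]
              · rw [hs, ha't] at hst
                rw [ha'val t ht] at hst
                rw [hs]
                exact hc.h4 _ _ (le_trans hat0w hst)
              · rw [ha'val s hs, ht, ha't, hw] at hst
                have h1 := hc.h3 s t₀ (le_trans hst inf_le_right)
                have h2 := hc.h3 s (t₀ - 1) (le_trans hst inf_le_left)
                rw [ht]
                rcases h1 with h1 | h1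
                · exact h1.symm
                · rcases h2 with h2 | h2
                  · exfalso; apply htwo
                    linear_combination h1 - h2
                  · exfalso; apply hone
                    linear_combination h1 - h2
              · rw [ha'val s hs, ha'val t ht] at hst; exact hc.h4 _ _ hst
            · exact hc.h5
            · intro s t hst
              by_cases ht : t = t₀
              · rw [ht, ha't, hw] at hst
                have h5a := hc.h5 s t₀ (le_trans hst inf_le_right)
                have h5b := hc.h5 s (t₀ - 1) (le_trans hst inf_le_left)
                apply hone
                linear_combination h5b - h5a
              · rw [ha'val t ht] at hst; exact hc.h6 s t hst
          have ha'mem : ∀ s, a' s ∈ C (k - 1) := by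
            intro s
            by_cases hs : s = t₀
            · rw [hs, ha't]; exact hwmem
            · rw [ha'val s hs]
              exact hmem _ (ha s) (ht₀ ▸ hane s t₀ hs)
          exact IH (k - 1) (by omega) (by omega) (by omega) a' b hcr' ha'mem hbmem
        · by_cases hB : ∃ t, b t = x₀
          · obtain ⟨t₀, ht₀⟩ := hB
            set w : L := a t₀ ⊔ a (t₀ + 1) with hw
            have hamem : ∀ s, a s ∈ C (k - 1) := fun s =>
              hmem _ (ha s) (fun h => hA ⟨s, h⟩)
            have hwmem : w ∈ C (k - 1) := hslat.supClosed (hamem _) (hamem _)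
            have hwle : w ≤ b t₀ := sup_le (hc.le1 t₀) (hc.le2 t₀)
            set b' : ZMod q → L := Function.update b t₀ w with hb'
            have hb'val : ∀ s, s ≠ t₀ → b' s = b s := fun s hs => Function.update_of_ne hs _ _
            have hb't : b' t₀ = w := Function.update_self _ _ _
            have hcr' : IsCrown a b' := by
              constructor
              · intro s
                by_cases hs : s = t₀
                · rw [hs, hb't]; exact le_sup_left
                · rw [hb'val s hs]; exact hc.le1 s
              · intro s
                by_cases hs : s = t₀
                · rw [hs, hb't]; exact le_sup_right
                · rw [hb'val s hs]; exact hc.le2 s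
              · intro s t hst
                by_cases ht : t = t₀
                · rw [ht, hb't] at hst
                  rw [ht]
                  exact hc.h3 _ _ (le_trans hst hwle)
                · rw [hb'val t ht] at hst; exact hc.h3 _ _ hst
              · exact hc.h4
              · intro s t hst
                by_cases hs : s = t₀ <;> by_cases ht : t = t₀
                · rw [hs, ht]
                · rw [hs, hb't] at hst
                  rw [hb'val t ht] at hst
                  have h1 := hc.h3 t₀ t (le_trans le_sup_left hst)
                  have h2 := hc.h3 (t₀ + 1) t (le_trans le_sup_right hst)
                  rw [hs]
                  rcases h1 with h1 | h1
                  · exact absurd h1 ht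
                  · rcases h2 with h2 | h2
                    · exfalso; apply htwo
                      linear_combination h1 - h2
                    · exfalso; apply hone
                      linear_combination h1 - h2
                · rw [hb'val s hs, ht, hb't] at hst
                  exact absurd (hc.h5 s t₀ (le_trans hst hwle)) hs
                · rw [hb'val s hs, hb'val t ht] at hst; exact hc.h5 _ _ hst
              · intro s t hst
                by_cases hs : s = t₀
                · rw [hs, hb't, hw] at hst
                  have h4a := hc.h4 t₀ t (le_trans le_sup_left hst)
                  have h4b := hc.h4 (t₀ + 1) t (le_trans le_sup_right hst)
                  apply hone
                  linear_combination h4b - h4a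
                · rw [hb'val s hs] at hst; exact hc.h6 s t hst
            have hb'mem : ∀ s, b' s ∈ C (k - 1) := by
              intro s
              by_cases hs : s = t₀
              · rw [hs, hb't]; exact hwmem
              · rw [hb'val s hs]
                exact hmem _ (hb s) (ht₀ ▸ hbne s t₀ hs)
            exact IH (k - 1) (by omega) (by omega) (by omega) a b' hcr' hamem hb'mem
          · have hamem : ∀ s, a s ∈ C (k - 1) := fun s =>
              hmem _ (ha s) (fun h => hA ⟨s, h⟩)
            have hbmem : ∀ s, b s ∈ C (k - 1) := fun s =>
              hmem _ (hb s) (fun h => hB ⟨s, h⟩)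
            exact IH (k - 1) (by omega) (by omega) (by omega) a b hc hamem hbmem
  apply key n hn1 le_rfl a b hcr
  · intro t; rw [htopC]; exact Set.mem_univ _
  · intro t; rw [htopC]; exact Set.mem_univ _


section RankLemmas

variable {r : L → ℕ}

lemma rank_lt (hrc : ∀ a b : L, a ⋖ b → r b = r a + 1) :
    ∀ b a : L, a < b → r a < r b := by
  intro b
  induction b using WellFoundedLT.induction with
  | ind b IH =>
    intro a h
    obtain ⟨c, hac, hcb⟩ := exists_le_covBy_of_lt h
    have h2 := hrc c b hcb
    rcases eq_or_lt_of_le hac with rfl | hlt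
    · omega
    · have := IH c hcb.lt a hlt
      omega

lemma rank_le (hrc : ∀ a b : L, a ⋖ b → r b = r a + 1) {a b : L} (h : a ≤ b) :
    r a ≤ r b := by
  rcases eq_or_lt_of_le h with rfl | hlt
  · exact le_rfl
  · exact le_of_lt (rank_lt hrc b a hlt)

lemma eq_of_le_rank (hrc : ∀ a b : L, a ⋖ b → r b = r a + 1) {a b : L} (h : a ≤ b)
    (he : r a = r b) : a = b := by
  rcases eq_or_lt_of_le h with rfl | hlt
  · rfl
  · have := rank_lt hrc b a hlt; omega

lemma covby_of_rank (hrc : ∀ a b : L, a ⋖ b → r b = r a + 1) {a b : L} (h : a < b)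
    (he : r b = r a + 1) : a ⋖ b := by
  refine ⟨h, fun c hac hcb => ?_⟩
  have := rank_lt hrc c a hac
  have := rank_lt hrc b c hcb
  omega

lemma eq_bot_of_rank [OrderBot L] (hr0 : r ⊥ = 0)
    (hrc : ∀ a b : L, a ⋖ b → r b = r a + 1) {a : L} (h : r a = 0) : a = ⊥ := by
  by_contra h2
  have := rank_lt hrc a ⊥ (bot_lt_iff_ne_bot.mpr h2)
  omega

lemma eq_top_of_rank [OrderTop L] (hrc : ∀ a b : L, a ⋖ b → r b = r a + 1) {a : L}
    (h : r a = r (⊤ : L)) : a = ⊤ := by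
  by_contra h2
  have := rank_lt hrc ⊤ a (lt_top_iff_ne_top.mpr h2)
  omega

lemma rank_le_top [OrderTop L] (hrc : ∀ a b : L, a ⋖ b → r b = r a + 1) (a : L) :
    r a ≤ r (⊤ : L) := rank_le hrc le_top

end RankLemmas

section WalkLemmas

lemma hasse_adj {S : Set L} {u v : S} (h : (hasseGraph L S).Adj u v) :
    ((u : L) ⋖ (v : L)) ∨ ((v : L) ⋖ (u : L)) := h

lemma walk_closed {S : Set L} (P : Set L)
    (hclosed : ∀ u v : S, (u : L) ∈ P →
      (((u : L) ⋖ (v : L)) ∨ ((v : L) ⋖ (u : L))) → (v : L) ∈ P) :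
    ∀ (u v : S) (_ : (hasseGraph L S).Walk u v), (u : L) ∈ P → (v : L) ∈ P := by
  intro u v w
  induction w with
  | nil => exact id
  | cons h p ih => intro hu; exact ih (hclosed _ _ hu (hasse_adj h))

lemma walk_extract {S : Set L} :
    ∀ (u v : S) (_ : (hasseGraph L S).Walk u v), ∃ m : ℕ, ∃ p : ℕ → L,
      p 0 = (u : L) ∧ p m = (v : L) ∧ (∀ j, j ≤ m → p j ∈ S) ∧
      (∀ j, j < m → (p j ⋖ p (j + 1) ∨ p (j + 1) ⋖ p j)) := by
  intro u v w
  induction w with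
  | @nil u2 =>
    exact ⟨0, fun _ => (u2 : L), rfl, rfl, fun j _ => u2.prop,
      fun j hj => absurd hj (Nat.not_lt_zero j)⟩
  | @cons u u1 v h p ih =>
    obtain ⟨m, pp, hp0, hpm, hpmem, hpadj⟩ := ih
    refine ⟨m + 1, fun t => if t = 0 then (u : L) else pp (t - 1), ?_, ?_, ?_, ?_⟩
    · simp
    · show (if m + 1 = 0 then (u : L) else pp (m + 1 - 1)) = (v : L)
      rw [if_neg (by omega)]
      simpa using hpm
    · intro j hj
      show (if j = 0 then (u : L) else pp (j - 1)) ∈ S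
      by_cases hj0 : j = 0
      · rw [if_pos hj0]; exact u.prop
      · rw [if_neg hj0]; exact hpmem (j - 1) (by omega)
    · intro j hj
      show ((if j = 0 then (u : L) else pp (j - 1)) ⋖ (if j + 1 = 0 then (u : L) else pp (j + 1 - 1)) ∨
        (if j + 1 = 0 then (u : L) else pp (j + 1 - 1)) ⋖ (if j = 0 then (u : L) else pp (j - 1)))
      rw [if_neg (Nat.succ_ne_zero j)]
      by_cases hj0 : j = 0
      · subst hj0
        rw [if_pos rfl]
        simpa [hp0] using hasse_adj h
      · rw [if_neg hj0]
        have e : j + 1 - 1 = j - 1 + 1 := by omega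
        rw [e]
        exact hpadj (j - 1) (by omega)

end WalkLemmas

lemma exists_doublyIrred [BoundedOrder L] (r : L → ℕ) (hr : IsRankFunction L r)
    (hd : Dismantlable L) (htop : 2 ≤ r (⊤ : L))
    (hbig : ∀ i : ℕ, 0 < i → i < r (⊤ : L) → 2 ≤ {v : L | r v = i}.ncard) :
    ∃ x : L, DoublyIrred x ∧ x ≠ ⊥ ∧ x ≠ ⊤ := by
  classical
  obtain ⟨hr0, hrc⟩ := hr
  obtain ⟨C, hC, hmono, htopC⟩ := hd
  set n := Nat.card L with hn
  have hbt : (⊥ : L) ≠ ⊤ := by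
    intro h
    have := congrArg r h
    rw [hr0] at this
    omega
  have hnon : Nontrivial L := ⟨⊥, ⊤, hbt⟩
  have hn2 : 2 ≤ n := Finite.one_lt_card_iff_nontrivial.mpr hnon
  have hsub : C (n - 1) ⊆ C n := hmono _ _ (by omega)
  have h1 := hC (n - 1) (by omega) (by omega)
  have hdiff : (C n \ C (n - 1)).ncard = 1 := by
    rw [Set.ncard_diff hsub (Set.toFinite _), (hC n (by omega) le_rfl).2, h1.2]; omega
  obtain ⟨x, hx⟩ := Set.ncard_eq_one.mp hdiff
  have hxmem : ∀ v : L, v ≠ x → v ∈ C (n - 1) := by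
    intro v hv
    by_contra hcon
    have hv2 : v ∈ C n \ C (n - 1) := ⟨by rw [htopC]; exact Set.mem_univ v, hcon⟩
    rw [hx] at hv2
    exact hv hv2
  have hxnot : x ∉ C (n - 1) := by
    have hx2 : x ∈ C n \ C (n - 1) := by rw [hx]; rfl
    exact hx2.2
  -- x ≠ ⊥ via two atoms
  have hxbot : x ≠ ⊥ := by
    intro hxb
    have h2 := hbig 1 one_pos (by omega)
    obtain ⟨a1, ha1, a2, ha2, hne⟩ :=
      (Set.one_lt_ncard (s := {v : L | r v = 1}) (Set.toFinite _)).mp (by omega)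
    simp only [Set.mem_setOf_eq] at ha1 ha2
    have hmm : a1 ⊓ a2 = ⊥ := by
      have hlt : a1 ⊓ a2 < a1 := by
        rcases eq_or_lt_of_le (inf_le_left : a1 ⊓ a2 ≤ a1) with he | hlt
        · exfalso
          have hle : a1 ≤ a2 := by rw [← he]; exact inf_le_right
          exact hne (eq_of_le_rank hrc hle (by omega))
        · exact hlt
      have := rank_lt hrc a1 _ hlt
      exact eq_bot_of_rank hr0 hrc (by omega)
    have m1 : a1 ∈ C (n - 1) := hxmem a1 (by rw [hxb]; intro h; rw [h] at ha1; omega)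
    have m2 : a2 ∈ C (n - 1) := hxmem a2 (by rw [hxb]; intro h; rw [h] at ha2; omega)
    have : a1 ⊓ a2 ∈ C (n - 1) := h1.1.infClosed m1 m2
    rw [hmm, ← hxb] at this
    exact hxnot this
  have hxtop : x ≠ ⊤ := by
    intro hxt
    have h2 := hbig (r (⊤ : L) - 1) (by omega) (by omega)
    obtain ⟨a1, ha1, a2, ha2, hne⟩ :=
      (Set.one_lt_ncard (s := {v : L | r v = r (⊤ : L) - 1}) (Set.toFinite _)).mp (by omega)
    simp only [Set.mem_setOf_eq] at ha1 ha2
    have hmm : a1 ⊔ a2 = ⊤ := by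
      have hlt : a1 < a1 ⊔ a2 := by
        rcases eq_or_lt_of_le (le_sup_left : a1 ≤ a1 ⊔ a2) with he | hlt
        · exfalso
          have hle : a2 ≤ a1 := by rw [he]; exact le_sup_right
          exact hne (eq_of_le_rank hrc hle (by omega)).symm
        · exact hlt
      have h3 := rank_lt hrc _ a1 hlt
      have h4 := rank_le_top hrc (a1 ⊔ a2)
      exact eq_top_of_rank hrc (by omega)
    have m1 : a1 ∈ C (n - 1) := hxmem a1 (by
      rw [hxt]; intro h; rw [h] at ha1; omega)
    have m2 : a2 ∈ C (n - 1) := hxmem a2 (by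
      rw [hxt]; intro h; rw [h] at ha2; omega)
    have : a1 ⊔ a2 ∈ C (n - 1) := h1.1.supClosed m1 m2
    rw [hmm, ← hxt] at this
    exact hxnot this
  -- meet irreducible
  refine ⟨x, ⟨?_, ?_⟩, hxbot, hxtop⟩
  · -- JoinIrred : ∃! z, z ⋖ x
    obtain ⟨m, hm, hmmax⟩ := Set.Finite.exists_maximalFor id {v : L | v < x}
      (Set.toFinite _) ⟨⊥, bot_lt_iff_ne_bot.mpr hxbot⟩
    simp only [Set.mem_setOf_eq, id] at hm hmmax
    replace hmmax : ∀ c, c < x → m ≤ c → m = c := fun c hc h => le_antisymm h (hmmax hc h)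
    have hcov : m ⋖ x := by
      refine ⟨hm, fun c hc1 hc2 => ?_⟩
      exact absurd (hmmax c hc2 (le_of_lt hc1)) (ne_of_lt hc1)
    refine ⟨m, hcov, fun c hc => ?_⟩
    have hmc : m ⊔ c ∈ C (n - 1) :=
      h1.1.supClosed (hxmem m (ne_of_lt hm)) (hxmem c (ne_of_lt hc.lt))
    have hlex : m ⊔ c ≤ x := sup_le (le_of_lt hm) (le_of_lt hc.lt)
    have hltx : m ⊔ c < x := lt_of_le_of_ne hlex (by
      intro h
      rw [h] at hmc
      exact hxnot hmc)
    have := hmmax (m ⊔ c) hltx le_sup_left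
    have hcm : c ≤ m := le_sup_right.trans (le_of_eq this.symm)
    rcases eq_or_lt_of_le hcm with he | hlt
    · exact he
    · exact absurd hm (hc.2 hlt)
  · -- MeetIrred : ∃! y, x ⋖ y
    obtain ⟨m, hm, hmmin⟩ := Set.Finite.exists_minimalFor id {v : L | x < v}
      (Set.toFinite _) ⟨⊤, lt_top_iff_ne_top.mpr hxtop⟩
    simp only [Set.mem_setOf_eq, id] at hm hmmin
    replace hmmin : ∀ c, x < c → c ≤ m → m = c := fun c hc h => le_antisymm (hmmin hc h) h
    have hcov : x ⋖ m := by
      refine ⟨hm, fun c hc1 hc2 => ?_⟩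
      exact absurd (hmmin c hc1 (le_of_lt hc2)) (ne_of_gt hc2)
    refine ⟨m, hcov, fun c hc => ?_⟩
    have hmc : m ⊓ c ∈ C (n - 1) :=
      h1.1.infClosed (hxmem m (ne_of_gt hm)) (hxmem c (ne_of_gt hc.lt))
    have hlex : x ≤ m ⊓ c := le_inf (le_of_lt hm) (le_of_lt hc.lt)
    have hltx : x < m ⊓ c := lt_of_le_of_ne hlex (by
      intro h
      rw [← h] at hmc
      exact hxnot hmc)
    have := hmmin (m ⊓ c) hltx inf_le_left
    have hcm : m ≤ c := (le_of_eq this).trans inf_le_right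
    rcases eq_or_lt_of_le hcm with he | hlt
    · exact he.symm
    · exact absurd hlt (hc.2 hm)

end CornerAux

/-- A finite, rank-connected, dismantlable lattice of rank at
least `2`, all of whose intermediate rank sets have at least two elements,
contains a doubly irreducible element having a corner. -/
theorem exists_doublyIrred_with_corner
    (L : Type*) [Lattice L] [Finite L] [BoundedOrder L]
    (r : L → ℕ) (hr : IsRankFunction L r)
    (hconn : ∀ i : ℕ, i < r (⊤ : L) →
      (hasseGraph L {v : L | r v = i ∨ r v = i + 1}).Connected)
    (hd : Dismantlable L)
    (htop : 2 ≤ r (⊤ : L))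
    (hbig : ∀ i : ℕ, 0 < i → i < r (⊤ : L) → 2 ≤ {v : L | r v = i}.ncard) :
    ∃ x : L, DoublyIrred x ∧ ∃ w : L, IsCornerOf w x := by
  classical
  obtain ⟨hr0, hrc⟩ := hr
  by_contra hcon
  push_neg at hcon
  obtain ⟨x, hdi, hxbot, hxtop⟩ := CornerAux.exists_doublyIrred r ⟨hr0, hrc⟩ hd htop hbig
  obtain ⟨z, hzx, hzuniq⟩ := hdi.1
  obtain ⟨y, hxy, hyuniq⟩ := hdi.2
  have hdi' : DoublyIrred x := ⟨⟨z, hzx, hzuniq⟩, ⟨y, hxy, hyuniq⟩⟩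
  set i := r x with hi
  have hzri : r x = r z + 1 := hrc z x hzx
  have hyr : r y = i + 1 := hrc x y hxy
  have hi1 : 1 ≤ i := by
    have hlt : (⊥ : L) < x := bot_lt_iff_ne_bot.mpr hxbot
    have := CornerAux.rank_lt hrc x ⊥ hlt
    omega
  have hzr : r z = i - 1 := by omega
  have hitop : i < r (⊤ : L) := by
    have hlt : x < ⊤ := lt_top_iff_ne_top.mpr hxtop
    exact CornerAux.rank_lt hrc ⊤ x hlt
  have hzy : z ≤ y := hzx.le.trans hxy.le
  have hltzx : ∀ v : L, v < x → v ≤ z := by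
    intro v hv
    obtain ⟨c, hvc, hcx⟩ := exists_le_covBy_of_lt hv
    rw [hzuniq c hcx] at hvc
    exact hvc
  have hmid : ∀ v : L, z < v → v < y → v = x := by
    intro v h1 h2
    by_contra hne
    have hr1 := CornerAux.rank_lt hrc v z h1
    have hr2 := CornerAux.rank_lt hrc y v h2
    have hc1 : z ⋖ v := CornerAux.covby_of_rank hrc h1 (by omega)
    have hc2 : v ⋖ y := CornerAux.covby_of_rank hrc h2 (by omega)
    exact hcon x hdi' v ⟨hdi', hne, z, y, hzx, hc1, hxy, hc2⟩
  -- there is another lower cover of y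
  have hA : ∃ w : L, w ⋖ y ∧ w ≠ x := by
    by_contra hno
    push_neg at hno
    have h2i := hbig i (by omega) hitop
    obtain ⟨x', hx'mem, hx'ne⟩ :=
      Set.exists_ne_of_one_lt_ncard (s := {v : L | r v = i}) (by omega) x
    simp only [Set.mem_setOf_eq] at hx'mem
    have hGc := hconn i hitop
    have hxS : x ∈ {v : L | r v = i ∨ r v = i + 1} := Or.inl rfl
    have hx'S : x' ∈ {v : L | r v = i ∨ r v = i + 1} := Or.inl hx'mem
    obtain ⟨w⟩ := hGc.preconnected ⟨x, hxS⟩ ⟨x', hx'S⟩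
    have hclose := CornerAux.walk_closed (L := L) {x, y} ?_ _ _ w (Set.mem_insert _ _)
    · simp only [Set.mem_insert_iff, Set.mem_singleton_iff] at hclose
      rcases hclose with h | h
      · exact hx'ne h
      · have h' : x' = y := h
        rw [h'] at hx'mem
        omega
    · intro u v hu hadj
      simp only [Set.mem_insert_iff, Set.mem_singleton_iff] at hu ⊢
      rcases hu with hu | hu
      · rcases hadj with hc | hc
        · right
          rw [hu] at hc
          exact hyuniq _ hc
        · exfalso
          rw [hu] at hc
          have hvz := hzuniq _ hc
          have hvS := v.prop
          simp only [Set.mem_setOf_eq] at hvS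
          rw [hvz, hzr] at hvS
          omega
      · rcases hadj with hc | hc
        · exfalso
          rw [hu] at hc
          have := hrc _ _ hc
          have hvS := v.prop
          simp only [Set.mem_setOf_eq] at hvS
          omega
        · left
          rw [hu] at hc
          exact hno _ hc
  obtain ⟨w₁, hw₁y, hw₁x⟩ := hA
  have hw₁r : r w₁ = i := by have := hrc w₁ y hw₁y; omega
  set D : Set L := {v : L | v ≤ y ∧ v ≠ x ∧ v ≠ z} with hD
  have hw₁D : w₁ ∈ D := ⟨hw₁y.le, hw₁x, by intro h; rw [h, hzr] at hw₁r; omega⟩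
  have hzS1 : z ∈ {v : L | r v = i - 1 ∨ r v = i - 1 + 1} := Or.inl hzr
  have hwS1 : w₁ ∈ {v : L | r v = i - 1 ∨ r v = i - 1 + 1} := Or.inr (by omega)
  have hG1 := hconn (i - 1) (by omega)
  obtain ⟨wk⟩ := hG1.preconnected ⟨z, hzS1⟩ ⟨w₁, hwS1⟩
  obtain ⟨m1, p1, hp10, hp1m, hp1mem, hp1adj⟩ := CornerAux.walk_extract _ _ wk
  set QQ : ℕ → Prop := fun m => ∃ p : ℕ → L, p 0 = z ∧
    (∀ j, j ≤ m → (r (p j) = i - 1 ∨ r (p j) = i)) ∧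
    (∀ j, j < m → (p j ⋖ p (j + 1) ∨ p (j + 1) ⋖ p j)) ∧ p m ∈ D with hQQ
  have hQex : ∃ m, QQ m := by
    refine ⟨m1, p1, hp10, ?_, hp1adj, hp1m ▸ hw₁D⟩
    intro j hj
    have := hp1mem j hj
    simp only [Set.mem_setOf_eq] at this
    rcases this with h | h
    · exact Or.inl h
    · exact Or.inr (by omega)
  set m₀ := Nat.find hQex with hm₀
  obtain ⟨p, hp0, hpr, hpadj, hpD⟩ := Nat.find_spec hQex
  rw [← hm₀] at hpr hpadj hpD
  have hmin : ∀ m', m' < m₀ → ¬ QQ m' := fun m' h => Nat.find_min hQex h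
  have hint : ∀ j, j < m₀ → p j ∉ D := by
    intro j hj hmem
    exact hmin j hj ⟨p, hp0, fun t ht => hpr t (by omega), fun t ht => hpadj t (by omega), hmem⟩
  -- parity of ranks along the path
  have hpar : ∀ j, j ≤ m₀ → r (p j) = i - 1 + j % 2 := by
    intro j
    induction j with
    | zero => intro _; rw [hp0]; omega
    | succ t iht =>
      intro hle
      have h1 := iht (by omega)
      have h2 := hpr t (by omega)
      have h3 := hpr (t + 1) hle
      rcases hpadj t (by omega) with h | h
      · have := hrc _ _ h; omega
      · have := hrc _ _ h; omega
  -- splicing: no long-distance covers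
  have hjump : ∀ j d : ℕ, 1 ≤ d → j + d ≤ m₀ →
      (p j ⋖ p (j + d) ∨ p (j + d) ⋖ p j) → d = 1 := by
    intro j d hd1 hjd hadj
    by_contra hne
    have hd2 : 2 ≤ d := by omega
    have hQ' : QQ (m₀ - d + 1) := by
      refine ⟨fun t => if t ≤ j then p t else p (t + d - 1), ?_, ?_, ?_, ?_⟩
      · show (if 0 ≤ j then p 0 else p (0 + d - 1)) = z
        rw [if_pos (Nat.zero_le j)]
        exact hp0
      · intro t ht
        show r (if t ≤ j then p t else p (t + d - 1)) = i - 1 ∨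
          r (if t ≤ j then p t else p (t + d - 1)) = i
        by_cases h : t ≤ j
        · rw [if_pos h]; exact hpr t (by omega)
        · rw [if_neg h]; exact hpr _ (by omega)
      · intro t ht
        show (if t ≤ j then p t else p (t + d - 1)) ⋖
            (if t + 1 ≤ j then p (t + 1) else p (t + 1 + d - 1)) ∨
          (if t + 1 ≤ j then p (t + 1) else p (t + 1 + d - 1)) ⋖
            (if t ≤ j then p t else p (t + d - 1))
        by_cases h1 : t + 1 ≤ j
        · rw [if_pos (by omega : t ≤ j), if_pos h1]
          exact hpadj t (by omega)
        · by_cases h0 : t ≤ j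
          · have hteq : t = j := by omega
            rw [if_pos h0, if_neg h1]
            have e : t + 1 + d - 1 = j + d := by omega
            rw [e, hteq]
            exact hadj
          · rw [if_neg h0, if_neg h1]
            have e : t + 1 + d - 1 = t + d - 1 + 1 := by omega
            rw [e]
            exact hpadj (t + d - 1) (by omega)
      · show (if m₀ - d + 1 ≤ j then p (m₀ - d + 1) else p (m₀ - d + 1 + d - 1)) ∈ D
        rw [if_neg (by omega)]
        have e : m₀ - d + 1 + d - 1 = m₀ := by omega
        rw [e]
        exact hpD
    exact hmin (m₀ - d + 1) (by omega) hQ'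
  -- injectivity
  have hinj : ∀ j k, j < k → k ≤ m₀ → p j ≠ p k := by
    intro j k hjk hkm heq
    rcases eq_or_lt_of_le hkm with hk | hk
    · rw [hk] at heq
      have : p j ∈ D := heq ▸ hpD
      exact hint j (by omega) this
    · set d := k - j with hd
      have hQ' : QQ (m₀ - d) := by
        refine ⟨fun t => if t ≤ j then p t else p (t + d), ?_, ?_, ?_, ?_⟩
        · show (if 0 ≤ j then p 0 else p (0 + d)) = z
          rw [if_pos (Nat.zero_le j)]
          exact hp0
        · intro t ht
          show r (if t ≤ j then p t else p (t + d)) = i - 1 ∨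
            r (if t ≤ j then p t else p (t + d)) = i
          by_cases h : t ≤ j
          · rw [if_pos h]; exact hpr t (by omega)
          · rw [if_neg h]; exact hpr _ (by omega)
        · intro t ht
          show (if t ≤ j then p t else p (t + d)) ⋖
              (if t + 1 ≤ j then p (t + 1) else p (t + 1 + d)) ∨
            (if t + 1 ≤ j then p (t + 1) else p (t + 1 + d)) ⋖
              (if t ≤ j then p t else p (t + d))
          by_cases h1 : t + 1 ≤ j
          · rw [if_pos (by omega : t ≤ j), if_pos h1]
            exact hpadj t (by omega)
          · by_cases h0 : t ≤ j
            · have hteq : t = j := by omega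
              rw [if_pos h0, if_neg h1]
              have e : t + 1 + d = k + 1 := by omega
              rw [e, hteq, heq]
              exact hpadj k (by omega)
            · rw [if_neg h0, if_neg h1]
              have e : t + 1 + d = t + d + 1 := by omega
              rw [e]
              exact hpadj (t + d) (by omega)
        · show (if m₀ - d ≤ j then p (m₀ - d) else p (m₀ - d + d)) ∈ D
          rw [if_neg (by omega)]
          have e : m₀ - d + d = m₀ := by omega
          rw [e]
          exact hpD
      exact hmin (m₀ - d) (by omega) hQ'
  -- no comparabilities at distance ≥ 2
  have hcompare : ∀ j k, j + 2 ≤ k → k ≤ m₀ → ¬ p j ≤ p k ∧ ¬ p k ≤ p j := by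
    intro j k hjk hkm
    have hrj := hpar j (by omega)
    have hrk := hpar k (by omega)
    by_cases hpar2 : j % 2 = k % 2
    · constructor
      · intro hle
        exact hinj j k (by omega) hkm (CornerAux.eq_of_le_rank hrc hle (by omega))
      · intro hle
        exact hinj j k (by omega) hkm (CornerAux.eq_of_le_rank hrc hle (by omega)).symm
    · by_cases hj0 : j % 2 = 0
      · constructor
        · intro hle
          have hlt : p j < p k := lt_of_le_of_ne hle (by
            intro h
            exact hinj j k (by omega) hkm h)
          have hcov : p j ⋖ p k := CornerAux.covby_of_rank hrc hlt (by omega)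
          have e : k = j + (k - j) := by omega
          have := hjump j (k - j) (by omega) (by omega) (by rw [← e]; exact Or.inl hcov)
          omega
        · intro hle
          have := CornerAux.rank_le hrc hle
          omega
      · constructor
        · intro hle
          have := CornerAux.rank_le hrc hle
          omega
        · intro hle
          have hlt : p k < p j := lt_of_le_of_ne hle (by
            intro h
            exact hinj j k (by omega) hkm h.symm)
          have hcov : p k ⋖ p j := CornerAux.covby_of_rank hrc hlt (by omega)
          have e : k = j + (k - j) := by omega
          have := hjump j (k - j) (by omega) (by omega) (by rw [← e]; exact Or.inr hcov)
          omega
  -- directions of consecutive covers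
  have hdir : ∀ j, j < m₀ → j % 2 = 0 → p j ⋖ p (j + 1) := by
    intro j hj hj2
    rcases hpadj j hj with h | h
    · exact h
    · exfalso
      have := hrc _ _ h
      have h1 := hpar j (by omega)
      have h2 := hpar (j + 1) (by omega)
      omega
  have hdir2 : ∀ j, j < m₀ → j % 2 = 1 → p (j + 1) ⋖ p j := by
    intro j hj hj2
    rcases hpadj j hj with h | h
    · exfalso
      have := hrc _ _ h
      have h1 := hpar j (by omega)
      have h2 := hpar (j + 1) (by omega)
      omega
    · exact h
  -- m₀ is even
  have hm0even : m₀ % 2 = 0 := by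
    by_contra hodd
    have hodd' : m₀ % 2 = 1 := by omega
    have hm01 : 1 ≤ m₀ := by omega
    have hrm : r (p m₀) = i := by have := hpar m₀ le_rfl; omega
    have hple : p m₀ ≤ y := hpD.1
    have hlt : p m₀ < y := lt_of_le_of_ne hple (by intro h; rw [h] at hrm; omega)
    have hcov : p m₀ ⋖ y := CornerAux.covby_of_rank hrc hlt (by omega)
    have hsd : p (m₀ - 1) ⋖ p m₀ := by
      have := hdir (m₀ - 1) (by omega) (by omega)
      have e : m₀ - 1 + 1 = m₀ := by omega
      rw [e] at this
      exact this
    by_cases hsz : p (m₀ - 1) = z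
    · rw [hsz] at hsd
      exact hcon x hdi' (p m₀) ⟨hdi', hpD.2.1, z, y, hzx, hsd, hxy, hcov⟩
    · have : p (m₀ - 1) ∈ D := by
        refine ⟨hsd.le.trans hple, ?_, hsz⟩
        intro h
        have := hpar (m₀ - 1) (by omega)
        rw [h] at this
        omega
      exact hint (m₀ - 1) (by omega) this
  have hm00 : m₀ ≠ 0 := by
    intro h
    rw [h, hp0] at hpD
    exact hpD.2.2 rfl
  have hm02 : m₀ ≠ 2 := by
    intro h2
    have hz1 : z ⋖ p 1 := by
      have := hdir 0 (by omega) (by omega)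
      rw [hp0] at this
      exact this
    have h21 : p 2 ⋖ p 1 := hdir2 1 (by omega) (by omega)
    have hp2D : p 2 ∈ D := by rw [h2] at hpD; exact hpD
    have hp2z : p 2 ≠ z := hp2D.2.2
    set v : L := p 2 ⊔ z with hv
    have hvp1 : v ≤ p 1 := sup_le h21.le hz1.le
    have hvy : v ≤ y := sup_le hp2D.1 hzy
    have hzv : z < v := by
      rcases eq_or_lt_of_le (le_sup_right : z ≤ v) with he | hlt
      · exfalso
        have hle : p 2 ≤ z := by rw [he]; exact le_sup_left
        have h1 := hpar 2 (by omega)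
        exact hp2z (CornerAux.eq_of_le_rank hrc hle (by omega))
      · exact hlt
    have hvney : v ≠ y := by
      intro h
      have h1 := CornerAux.rank_le hrc hvp1
      have h2 := hpar 1 (by omega)
      rw [h] at h1
      omega
    have hvx : v = x := hmid v hzv (lt_of_le_of_ne hvy hvney)
    have hp2x : p 2 ≤ x := by rw [← hvx]; exact le_sup_left
    have hp2nx : p 2 ≠ x := hp2D.2.1
    have := hltzx (p 2) (lt_of_le_of_ne hp2x hp2nx)
    have h1 := hpar 2 (by omega)
    exact hp2z (CornerAux.eq_of_le_rank hrc this (by omega))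
  have hm04 : 4 ≤ m₀ := by omega
  -- build the crown
  set q : ℕ := m₀ / 2 + 1 with hq
  have hq3 : 3 ≤ q := by omega
  have hm2 : m₀ = 2 * (q - 1) := by omega
  haveI : NeZero q := ⟨by omega⟩
  have hvlt : ∀ t : ZMod q, t.val < q := fun t => ZMod.val_lt t
  have hvinj : ∀ s t : ZMod q, s.val = t.val → s = t := fun s t h => ZMod.val_injective q h
  have hvcast : ∀ t : ZMod q, ((t.val : ℕ) : ZMod q) = t := fun t => ZMod.natCast_rightInverse t
  have hsucc : ∀ t : ZMod q, t.val + 1 < q → (t + 1).val = t.val + 1 := by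
    intro t h
    conv_lhs => rw [← hvcast t]
    rw [← Nat.cast_add_one, ZMod.val_cast_of_lt h]
  have hlastval : ∀ t : ZMod q, t.val = q - 1 → t + 1 = 0 := by
    intro t h
    have hq0 : ((q : ℕ) : ZMod q) = 0 := ZMod.natCast_self q
    conv_lhs => rw [← hvcast t]
    rw [h, ← Nat.cast_add_one]
    have e : q - 1 + 1 = q := by omega
    rw [e, hq0]
  have hsub1 : ∀ s t : ZMod q, s.val = t.val + 1 → t = s - 1 := by
    intro s t h
    have hst : s = t + 1 := by
      rw [← hvcast s, h, Nat.cast_add_one, hvcast t]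
    rw [hst]
    ring
  set a : ZMod q → L := fun t => p (2 * t.val) with ha
  set b : ZMod q → L := fun t => if t.val = q - 1 then y else p (2 * t.val + 1) with hb
  have haval : ∀ t : ZMod q, 2 * t.val ≤ m₀ := by
    intro t; have := hvlt t; omega
  have hbval : ∀ t : ZMod q, t.val ≠ q - 1 → 2 * t.val + 1 < m₀ := by
    intro t h; have := hvlt t; omega
  have hra : ∀ t : ZMod q, r (a t) = i - 1 := by
    intro t
    have := hpar (2 * t.val) (haval t)
    show r (p (2 * t.val)) = i - 1
    omega
  have hnotx : ∀ j, j < m₀ → p j ≠ x := by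
    intro j hj hx
    by_cases hj2 : j % 2 = 0
    · have := hpar j (by omega)
      rw [hx] at this
      omega
    · have hcov := hdir2 j hj (by omega)
      rw [hx] at hcov
      have := hzuniq _ hcov
      have := hinj 0 (j + 1) (by omega) (by omega)
      rw [hp0] at this
      exact this ((hzuniq _ hcov).symm)
  have hcrown : CornerAux.IsCrown a b := by
    constructor
    · -- le1
      intro t
      show p (2 * t.val) ≤ (if t.val = q - 1 then y else p (2 * t.val + 1))
      by_cases ht : t.val = q - 1
      · rw [if_pos ht]
        have e : 2 * t.val = m₀ := by omega
        rw [e]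
        exact hpD.1
      · rw [if_neg ht]
        exact (hdir (2 * t.val) (by have := hbval t ht; omega) (by omega)).le
    · -- le2
      intro t
      by_cases ht : t.val = q - 1
      · have h0 : t + 1 = 0 := hlastval t ht
        show p (2 * (t + 1).val) ≤ (if t.val = q - 1 then y else p (2 * t.val + 1))
        rw [if_pos ht, h0]
        show p (2 * (0 : ZMod q).val) ≤ y
        rw [ZMod.val_zero]
        simpa [hp0] using hzy
      · have hs : (t + 1).val = t.val + 1 := hsucc t (by have := hvlt t; omega)
        show p (2 * (t + 1).val) ≤ (if t.val = q - 1 then y else p (2 * t.val + 1))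
        rw [if_neg ht, hs]
        have e : 2 * (t.val + 1) = 2 * t.val + 1 + 1 := by omega
        rw [e]
        exact (hdir2 (2 * t.val + 1) (hbval t ht) (by omega)).le
    · -- h3
      intro s t hle
      change p (2 * s.val) ≤ (if t.val = q - 1 then y else p (2 * t.val + 1)) at hle
      by_cases ht : t.val = q - 1
      · rw [if_pos ht] at hle
        by_cases hs0 : s.val = 0
        · right
          have hs' : s = 0 := hvinj s 0 (by rw [hs0, ZMod.val_zero])
          have h0 := hlastval t ht
          rw [hs']
          linear_combination h0
        · by_cases hsm : s.val = q - 1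
          · left
            exact (hvinj s t (by omega)).symm
          · exfalso
            have hmem : p (2 * s.val) ∈ D := by
              refine ⟨hle, ?_, ?_⟩
              · intro h
                have := hra s
                rw [ha] at this
                simp only at this
                rw [h] at this
                omega
              · intro h
                have := hinj 0 (2 * s.val) (by omega) (haval s)
                rw [hp0] at this
                exact this h.symm
            exact hint (2 * s.val) (by have := hvlt s; omega) hmem
      · rw [if_neg ht] at hle
        have hsle : 2 * s.val ≤ m₀ := haval s
        have htlt : 2 * t.val + 1 < m₀ := hbval t ht
        rcases lt_trichotomy (2 * s.val) (2 * t.val + 1) with hlt | heq | hgt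
        · by_cases hd : 2 * s.val + 2 ≤ 2 * t.val + 1
          · exact absurd hle (hcompare (2 * s.val) (2 * t.val + 1) hd (by omega)).1
          · left
            exact (hvinj s t (by omega)).symm
        · omega
        · by_cases hd : 2 * t.val + 1 + 2 ≤ 2 * s.val
          · exact absurd hle (hcompare (2 * t.val + 1) (2 * s.val) hd (by omega)).2
          · right
            exact hsub1 s t (by omega)
    · -- h4
      intro s t hle
      change p (2 * s.val) ≤ p (2 * t.val) at hle
      have heqr : r (p (2 * s.val)) = r (p (2 * t.val)) := by
        have h1 := hpar (2 * s.val) (haval s)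
        have h2 := hpar (2 * t.val) (haval t)
        omega
      have heq := CornerAux.eq_of_le_rank hrc hle heqr
      rcases lt_trichotomy (2 * s.val) (2 * t.val) with hlt | he | hgt
      · exact absurd heq (hinj _ _ hlt (haval t))
      · exact hvinj s t (by omega)
      · exact absurd heq.symm (hinj _ _ hgt (haval s))
    · -- h5
      intro s t hle
      change (if s.val = q - 1 then y else p (2 * s.val + 1)) ≤
        (if t.val = q - 1 then y else p (2 * t.val + 1)) at hle
      by_cases hs : s.val = q - 1 <;> by_cases ht : t.val = q - 1
      · exact hvinj s t (by omega)
      · exfalso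
        rw [if_pos hs, if_neg ht] at hle
        have h1 := CornerAux.rank_le hrc hle
        have h2 := hpar (2 * t.val + 1) (by have := hbval t ht; omega)
        omega
      · exfalso
        rw [if_neg hs, if_pos ht] at hle
        have hmem : p (2 * s.val + 1) ∈ D := by
          refine ⟨hle, hnotx _ (hbval s hs), ?_⟩
          intro h
          have := hinj 0 (2 * s.val + 1) (by omega) (by have := hbval s hs; omega)
          rw [hp0] at this
          exact this h.symm
        exact hint (2 * s.val + 1) (hbval s hs) hmem
      · rw [if_neg hs, if_neg ht] at hle
        have heqr : r (p (2 * s.val + 1)) = r (p (2 * t.val + 1)) := by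
          have h1 := hpar (2 * s.val + 1) (by have := hbval s hs; omega)
          have h2 := hpar (2 * t.val + 1) (by have := hbval t ht; omega)
          omega
        have heq := CornerAux.eq_of_le_rank hrc hle heqr
        rcases lt_trichotomy (2 * s.val + 1) (2 * t.val + 1) with hlt | he | hgt
        · exact absurd heq (hinj _ _ hlt (by have := hbval t ht; omega))
        · exact hvinj s t (by omega)
        · exact absurd heq.symm (hinj _ _ hgt (by have := hbval s hs; omega))
    · -- h6
      intro s t hle
      change (if s.val = q - 1 then y else p (2 * s.val + 1)) ≤ p (2 * t.val) at hle
      have hrt : r (p (2 * t.val)) = i - 1 := by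
        have := hpar (2 * t.val) (haval t)
        omega
      by_cases hs : s.val = q - 1
      · rw [if_pos hs] at hle
        have := CornerAux.rank_le hrc hle
        omega
      · rw [if_neg hs] at hle
        have := CornerAux.rank_le hrc hle
        have h2 := hpar (2 * s.val + 1) (by have := hbval s hs; omega)
        omega
  exact CornerAux.not_dismantlable_of_crown hq3 a b hcrown hd
end

section
/- Let L be a finite ranked lattice and suppose that for some i with 0 < i < r(⊤) the rank set R_i consists of a single element x. If both intervals [⊥, x] and [x, ⊤] (as lattices) are lexicographically shellable, then L is lexicographically shellable; indeed, any lexicographic shelling of [⊥, x] together with any lexicographic shelling of [x, ⊤] whose labels are all strictly greater than all labels used on [⊥, x] gives a lexicographic shelling of L. -/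
section ListAuxGlue
open List

variable {α : Type*}

private lemma edg_append (t : List α) (m : α) :
    ∀ s : List α, (s ++ m :: t).zip (s ++ m :: t).tail
      = ((s ++ [m]).zip (s ++ [m]).tail) ++ ((m :: t).zip t)
  | [] => by simp
  | [a] => by simp
  | a :: b :: s' => by
    have ih := edg_append t m (b :: s')
    simp only [cons_append, List.zip, tail_cons] at ih ⊢
    simp only [List.zipWith_cons_cons, List.cons_append]
    exact congrArg _ ih

private lemma mem_edg {p : α × α} {l : List α} (h : p ∈ l.zip l.tail) :
    p.1 ∈ l ∧ p.2 ∈ l := by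
  obtain ⟨a, b⟩ := p
  obtain ⟨h1, h2⟩ := List.of_mem_zip h
  exact ⟨h1, List.mem_of_mem_tail h2⟩

private lemma mem_of_getLast?_eq {l : List α} {a : α} (h : l.getLast? = some a) : a ∈ l := by
  obtain ⟨h', rfl⟩ := List.mem_getLast?_eq_getLast (Option.mem_def.mpr h)
  exact List.getLast_mem h'

private lemma rel_of_mem_edg {R : α → α → Prop} :
    ∀ {l : List α}, l.Chain' R → ∀ p ∈ l.zip l.tail, R p.1 p.2
  | [], _, p, hp => by simp at hp
  | [a], _, p, hp => by simp at hp
  | a :: b :: t, hc, p, hp => by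
    replace hc := List.isChain_cons_cons.mp hc
    rcases (by simpa [List.zip_cons_cons] using hp : p = (a, b) ∨ p ∈ (b :: t).zip t) with
      rfl | hp'
    · exact hc.1
    · exact rel_of_mem_edg hc.2 p hp'

private lemma chain'_congr_mem {R S : α → α → Prop} :
    ∀ {l : List α}, (∀ a ∈ l, ∀ b ∈ l, (R a b ↔ S a b)) → (l.Chain' R ↔ l.Chain' S)
  | [], _ => ⟨fun _ => List.IsChain.nil, fun _ => List.IsChain.nil⟩
  | a :: l, h => by
    show List.IsChain R (a :: l) ↔ List.IsChain S (a :: l)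
    rw [List.isChain_cons, List.isChain_cons]
    constructor <;> rintro ⟨h1, h2⟩
    · refine ⟨fun y hy => (h a (by simp) y (by simp [List.mem_of_mem_head? hy])).mp (h1 y hy), ?_⟩
      exact (chain'_congr_mem fun c hc d hd => h c (by simp [hc]) d (by simp [hd])).mp h2
    · refine ⟨fun y hy => (h a (by simp) y (by simp [List.mem_of_mem_head? hy])).mpr (h1 y hy), ?_⟩
      exact (chain'_congr_mem fun c hc d hd => h c (by simp [hc]) d (by simp [hd])).mpr h2

variable {β : Type*} [Preorder β]

private lemma head_le_mem {l : List β} {u : β} (hc : l.Chain' (· < ·))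
    (hu : l.head? = some u) : ∀ a ∈ l, u ≤ a := by
  have hp : l.Pairwise (· < ·) := List.isChain_iff_pairwise.mp hc
  cases l with
  | nil => simp at hu
  | cons c t =>
    obtain rfl : c = u := by simpa using hu
    intro a ha
    rcases List.mem_cons.mp ha with rfl | ha'
    · exact le_rfl
    · exact ((List.pairwise_cons.mp hp).1 a ha').le

private lemma mem_le_last {l : List β} {v : β} (hc : l.Chain' (· < ·))
    (hv : l.getLast? = some v) : ∀ a ∈ l, a ≤ v := by
  have hc' : l.reverse.Chain' (· > ·) := by
    exact List.isChain_reverse.mpr hc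
  have hp : l.reverse.Pairwise (· > ·) := List.isChain_iff_pairwise.mp hc'
  have hu : l.reverse.head? = some v := by rw [List.head?_reverse]; exact hv
  intro a ha
  have ha' : a ∈ l.reverse := by simpa using ha
  cases hrev : l.reverse with
  | nil => rw [hrev] at ha'; simp at ha'
  | cons c t =>
    rw [hrev] at hu hp ha'
    obtain rfl : c = v := by simpa using hu
    rcases List.mem_cons.mp ha' with rfl | ha''
    · exact le_rfl
    · exact ((List.pairwise_cons.mp hp).1 a ha'').le

end ListAuxGlue

section MainAux

variable {L : Type*} [Lattice L]

section RankAux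
variable [Finite L] [BoundedOrder L]

private lemma exists_cov_le {a b : L} (h : a < b) : ∃ c, a ⋖ c ∧ c ≤ b := by
  have hwf : WellFoundedLT L := Finite.to_wellFoundedLT
  obtain ⟨c, hc, hmin⟩ := hwf.wf.has_min {c | a < c ∧ c ≤ b} ⟨b, h, le_rfl⟩
  exact ⟨c, ⟨hc.1, fun d hd1 hd2 => hmin d ⟨hd1, hd2.le.trans hc.2⟩ hd2⟩, hc.2⟩

private lemma exists_rank_between {r : L → ℕ} (hr : IsRankFunction L r) :
    ∀ n (a b : L), a ≤ b → ∀ j, r a ≤ j → j ≤ r b → j - r a ≤ n →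
      ∃ c, a ≤ c ∧ c ≤ b ∧ r c = j := by
  intro n
  induction n with
  | zero =>
    intro a b hab j h1 h2 h3
    exact ⟨a, le_rfl, hab, by omega⟩
  | succ n ih =>
    intro a b hab j h1 h2 h3
    rcases eq_or_lt_of_le h1 with he | hlt
    · exact ⟨a, le_rfl, hab, he⟩
    · have hne : a ≠ b := by rintro rfl; omega
      obtain ⟨c, hc, hcb⟩ := exists_cov_le (lt_of_le_of_ne hab hne)
      have hrc : r c = r a + 1 := hr.2 a c hc
      obtain ⟨d, hd1, hd2, hd3⟩ := ih c b hcb j (by omega) h2 (by omega)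
      exact ⟨d, hc.1.le.trans hd1, hd2, hd3⟩

private lemma comp_with_x {r : L → ℕ} {i : ℕ} {x : L} (hr : IsRankFunction L r)
    (hit : i < r (⊤ : L)) (hx : {v : L | r v = i} = {x}) (v : L) : v ≤ x ∨ x ≤ v := by
  rcases le_or_gt (r v) i with hcase | hcase
  · obtain ⟨c, hc1, _, hc3⟩ :=
      exists_rank_between hr (i - r v) v ⊤ le_top i hcase hit.le le_rfl
    have hcx : c = x := by
      have hmem : c ∈ {v : L | r v = i} := hc3
      rwa [hx, Set.mem_singleton_iff] at hmem
    exact Or.inl (hcx ▸ hc1)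
  · obtain ⟨c, _, hc2, hc3⟩ :=
      exists_rank_between hr i ⊥ v bot_le i (by rw [hr.1]; omega) hcase.le (by rw [hr.1]; omega)
    have hcx : c = x := by
      have hmem : c ∈ {v : L | r v = i} := hc3
      rwa [hx, Set.mem_singleton_iff] at hmem
    exact Or.inr (hcx ▸ hc2)

private lemma cov_cases {x : L} (hcomp : ∀ v : L, v ≤ x ∨ x ≤ v) {a b : L}
    (h : a ⋖ b) : b ≤ x ∨ x ≤ a := by
  rcases hcomp b with hb | hb
  · exact Or.inl hb
  rcases hcomp a with ha | ha
  swap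
  · exact Or.inr ha
  rcases eq_or_lt_of_le ha with rfl | hlt
  · exact Or.inr le_rfl
  · rcases eq_or_lt_of_le hb with heq | hlt2
    · exact Or.inl (le_of_eq heq.symm)
    · exact absurd hlt2 (h.2 hlt)

end RankAux

variable {x : L} {f g h : L → L → ℝ}

private lemma rising_congr_below (hhf : ∀ a b : L, b ≤ x → h a b = f a b)
    {l : List L} {v : L} (hv : l.getLast? = some v) (hvx : v ≤ x) :
    RisingChain h l ↔ RisingChain f l := by
  unfold RisingChain
  apply and_congr_right
  intro hc
  apply chain'_congr_mem
  intro p hp q hq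
  have hlt : l.Chain' (· < ·) := hc.imp fun a b hab => hab.lt
  have h1 : p.2 ≤ x := le_trans (mem_le_last hlt hv p.2 (mem_edg hp).2) hvx
  have h2 : q.2 ≤ x := le_trans (mem_le_last hlt hv q.2 (mem_edg hq).2) hvx
  rw [hhf p.1 p.2 h1, hhf q.1 q.2 h2]

private lemma rising_congr_above (hhg : ∀ a b : L, ¬ b ≤ x → h a b = g a b)
    {l : List L} {u : L} (hu : l.head? = some u) (hxu : x ≤ u) :
    RisingChain h l ↔ RisingChain g l := by
  unfold RisingChain
  apply and_congr_right
  intro hc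
  have hlt : l.Chain' (· < ·) := hc.imp fun a b hab => hab.lt
  have key : ∀ p' : L × L, p' ∈ l.zip l.tail → ¬ p'.2 ≤ x := by
    intro p' hp' hle
    have h1 : x ≤ p'.1 := le_trans hxu (head_le_mem hlt hu p'.1 (mem_edg hp').1)
    exact absurd (hle.trans h1) (rel_of_mem_edg hc p' hp').lt.not_ge
  apply chain'_congr_mem
  intro p hp q hq
  rw [hhg p.1 p.2 (key p hp), hhg q.1 q.2 (key q hq)]

private lemma rising_glue
    (hhf : ∀ a b : L, b ≤ x → h a b = f a b) (hhg : ∀ a b : L, ¬ b ≤ x → h a b = g a b)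
    (hfg : ∀ a b c d : L, a ⋖ b → b ≤ x → x ≤ c → c ⋖ d → f a b < g c d)
    {s t : List L} (hsx : s.getLast? = some x)
    (hrs : RisingChain f s) (hrt : RisingChain g (x :: t)) (ht : t ≠ []) :
    RisingChain h (s ++ t) := by
  have hsne : s ≠ [] := by rintro rfl; simp at hsx
  obtain ⟨c, t', rfl⟩ : ∃ c t', t = c :: t' := by
    cases t with
    | nil => exact absurd rfl ht
    | cons c t' => exact ⟨c, t', rfl⟩
  have hxc : x ⋖ c := (List.isChain_cons_cons.mp hrt.1).1
  have hrs' : RisingChain h s := (rising_congr_below hhf hsx le_rfl).mpr hrs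
  have hrt' : RisingChain h (x :: c :: t') := (rising_congr_above hhg (List.head?_cons) le_rfl).mpr hrt
  have hglx : s.getLast hsne = x := by
    have he := List.getLast?_eq_getLast_of_ne_nil hsne
    rw [he] at hsx
    exact Option.some.inj hsx
  have hsd : s.dropLast ++ [x] = s := by
    conv_rhs => rw [← List.dropLast_append_getLast hsne, hglx]
  constructor
  · refine List.IsChain.append hrs'.1 (List.IsChain.tail hrt'.1) ?_
    intro a ha b hb
    rw [hsx] at ha
    obtain rfl : x = a := by simpa using ha
    obtain rfl : c = b := by simpa using hb
    exact hxc
  · have hedg : (s ++ c :: t').zip (s ++ c :: t').tail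
        = (s.zip s.tail) ++ ((x :: c :: t').zip (c :: t')) := by
      calc (s ++ c :: t').zip (s ++ c :: t').tail
          = ((s.dropLast ++ x :: c :: t').zip (s.dropLast ++ x :: c :: t').tail) := by
            rw [show s.dropLast ++ x :: c :: t' = (s.dropLast ++ [x]) ++ c :: t' by simp, hsd]
        _ = ((s.dropLast ++ [x]).zip (s.dropLast ++ [x]).tail) ++ ((x :: c :: t').zip (c :: t')) :=
            edg_append _ _ _
        _ = (s.zip s.tail) ++ ((x :: c :: t').zip (c :: t')) := by rw [hsd]
    show ((s ++ c :: t').zip (s ++ c :: t').tail).Chain' _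
    rw [hedg]
    refine List.IsChain.append hrs'.2 hrt'.2 ?_
    intro p hp q hq
    have hpm : p ∈ s.zip s.tail := mem_of_getLast?_eq (Option.mem_def.mp hp)
    obtain rfl : (x, c) = q := by simpa [List.zip_cons_cons] using hq
    have hpcov : p.1 ⋖ p.2 := rel_of_mem_edg hrs.1 p hpm
    have hp2 : p.2 ≤ x :=
      mem_le_last (hrs.1.imp fun a b hab => hab.lt) hsx p.2 (mem_edg hpm).2
    have hncx : ¬ c ≤ x := fun hcx => absurd hcx hxc.lt.not_ge
    show h p.1 p.2 ≤ h x c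
    rw [hhf p.1 p.2 hp2, hhg x c hncx]
    exact (hfg p.1 p.2 x c hpcov hp2 le_rfl hxc).le

private lemma rising_split
    (hcov : ∀ a b : L, a ⋖ b → b ≤ x ∨ x ≤ a)
    (hhf : ∀ a b : L, b ≤ x → h a b = f a b) (hhg : ∀ a b : L, ¬ b ≤ x → h a b = g a b)
    {l : List L} {u v : L} (hl : RisingChain h l) (hu : l.head? = some u)
    (hv : l.getLast? = some v) (hux : u ≤ x) (hvx : ¬ v ≤ x) :
    ∃ s t : List L, l = s ++ t ∧ s.head? = some u ∧ s.getLast? = some x ∧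
      t ≠ [] ∧ (x :: t).getLast? = some v ∧ RisingChain f s ∧ RisingChain g (x :: t) := by
  classical
  let q : L → Bool := fun z => decide (z ≤ x)
  have hst : l = l.takeWhile q ++ l.dropWhile q := (List.takeWhile_append_dropWhile (p := q) (l := l)).symm
  have hsq : ∀ a ∈ l.takeWhile q, a ≤ x := by
    intro a ha
    have := List.mem_takeWhile_imp ha
    simpa [q] using this
  have htne : l.dropWhile q ≠ [] := by
    intro h0
    have hvl : v ∈ l := mem_of_getLast?_eq hv
    rw [hst, h0, List.append_nil] at hvl
    exact hvx (hsq v hvl)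
  have hsu : (l.takeWhile q).head? = some u := by
    cases l with
    | nil => simp at hu
    | cons a l' =>
      obtain rfl : a = u := by simpa using hu
      rw [List.takeWhile_cons_of_pos (by simpa [q] using hux)]
      rfl
  have hsne : (l.takeWhile q) ≠ [] := by
    intro h0
    rw [h0] at hsu
    simp at hsu
  obtain ⟨hcs, hct, hjun⟩ := List.isChain_append.mp (hst ▸ hl.1)
  have hb? : (l.dropWhile q).head? = some ((l.dropWhile q).head htne) := List.head?_eq_head htne
  have hbq : ¬ (l.dropWhile q).head htne ≤ x := by
    have h0 : 0 < (l.dropWhile q).length := List.length_pos_iff.mpr htne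
    have hnot := List.dropWhile_get_zero_not q l h0
    rw [List.get_mk_zero h0] at hnot
    simpa [q] using hnot
  have hjx : ∀ a ∈ (l.takeWhile q).getLast?, a ⋖ (l.dropWhile q).head htne :=
    fun a ha => hjun a ha _ (Option.mem_def.mpr hb?)
  have hglx : (l.takeWhile q).getLast hsne = x := by
    have hab := hjx _ (Option.mem_def.mpr (List.getLast?_eq_getLast_of_ne_nil hsne))
    exact le_antisymm (hsq _ (List.getLast_mem hsne)) ((hcov _ _ hab).resolve_left hbq)
  have hgl : (l.takeWhile q).getLast? = some x := by
    rw [List.getLast?_eq_getLast_of_ne_nil hsne, hglx]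
  have hxb : x ⋖ (l.dropWhile q).head htne := by
    have := hjx _ (Option.mem_def.mpr hgl)
    exact this
  have hsd : (l.takeWhile q).dropLast ++ [x] = l.takeWhile q := by
    conv_rhs => rw [← List.dropLast_append_getLast hsne, hglx]
  have hedg : l.zip l.tail
      = ((l.takeWhile q).zip (l.takeWhile q).tail)
        ++ ((x :: l.dropWhile q).zip (l.dropWhile q)) := by
    conv_lhs => rw [hst]
    rw [show (l.takeWhile q) ++ l.dropWhile q
        = (l.takeWhile q).dropLast ++ x :: l.dropWhile q by rw [← hsd]; simp]
    rw [edg_append, hsd]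
  obtain ⟨hes, het, hejun⟩ := List.isChain_append.mp (hedg ▸ hl.2)
  have hcxt : (x :: l.dropWhile q).Chain' (· ⋖ ·) := by
    apply List.isChain_cons.mpr
    refine ⟨fun y hy => ?_, hct⟩
    obtain rfl : (l.dropWhile q).head htne = y := by
      rw [hb?] at hy
      simpa using hy
    exact hxb
  refine ⟨_, _, hst, hsu, hgl, htne, ?_, ?_, ?_⟩
  · have hcc : (x :: l.dropWhile q).getLast? = (l.dropWhile q).getLast? := by
      cases hdw : l.dropWhile q with
      | nil => exact absurd hdw htne
      | cons c cs => rw [List.getLast?_cons_cons]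
    rw [hcc, ← List.getLast?_append_of_ne_nil _ htne, ← hst]
    exact hv
  · exact (rising_congr_below hhf hgl le_rfl).mp ⟨hcs, hes⟩
  · exact (rising_congr_above hhg (List.head?_cons) le_rfl).mp ⟨hcxt, het⟩

end MainAux


/-- If some intermediate rank set of a finite ranked lattice is
a singleton `{x}`, then lexicographic shellings of `[⊥, x]` and `[x, ⊤]`, the
labels of the latter all strictly greater than the labels of the former, glue
to a lexicographic shelling of `L`; in particular `L` is lexicographically
shellable. -/
theorem lexShelling_glue_at_singleton_rank
    (L : Type*) [Lattice L] [Finite L] [BoundedOrder L]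
    (r : L → ℕ) (hr : IsRankFunction L r)
    (i : ℕ) (hi0 : 0 < i) (hit : i < r (⊤ : L))
    (x : L) (hx : {v : L | r v = i} = {x})
    (f g : L → L → ℝ)
    (hf : IsLexShellingOn (⊥ : L) x f)
    (hg : IsLexShellingOn x (⊤ : L) g)
    (hfg : ∀ a b c d : L, a ⋖ b → b ≤ x → x ≤ c → c ⋖ d → f a b < g c d) :
    letI : DecidableRel ((· ≤ ·) : L → L → Prop) := Classical.decRel _
    IsLexShellingOn (⊥ : L) (⊤ : L) (fun u v => if v ≤ x then f u v else g u v) ∧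
    LexShellable L := by
  show _ ∧ _
  have hcomp : ∀ v : L, v ≤ x ∨ x ≤ v := comp_with_x hr hit hx
  have hcov : ∀ a b : L, a ⋖ b → b ≤ x ∨ x ≤ a := fun a b hab => cov_cases hcomp hab
  have main : ∀ h : L → L → ℝ, (∀ a b : L, b ≤ x → h a b = f a b) →
      (∀ a b : L, ¬ b ≤ x → h a b = g a b) → IsLexShellingOn (⊥ : L) (⊤ : L) h := by
    intro h hhf hhg
    constructor
    · -- unique rising chains
      intro u v _ huv _
      by_cases hvx : v ≤ x
      · obtain ⟨S, hS, hSu⟩ := hf.1 u v bot_le huv hvx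
        refine ⟨S, ⟨hS.1, hS.2.1, (rising_congr_below hhf hS.2.1 hvx).mpr hS.2.2⟩, ?_⟩
        rintro l ⟨h1, h2, h3⟩
        exact hSu l ⟨h1, h2, (rising_congr_below hhf h2 hvx).mp h3⟩
      · by_cases hxu : x ≤ u
        · obtain ⟨S, hS, hSu⟩ := hg.1 u v hxu huv le_top
          refine ⟨S, ⟨hS.1, hS.2.1, (rising_congr_above hhg hS.1 hxu).mpr hS.2.2⟩, ?_⟩
          rintro l ⟨h1, h2, h3⟩
          exact hSu l ⟨h1, h2, (rising_congr_above hhg h1 hxu).mp h3⟩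
        · have hux : u ≤ x := (hcomp u).resolve_right hxu
          have hxv : x ≤ v := (hcomp v).resolve_left hvx
          obtain ⟨S, hS, hSu⟩ := hf.1 u x bot_le hux le_rfl
          obtain ⟨T, hT, hTu⟩ := hg.1 x v le_rfl hxv le_top
          obtain ⟨c, t0, rfl⟩ : ∃ c t0, T = c :: t0 := by
            cases T with
            | nil => exact absurd hT.1 (by simp)
            | cons c t0 => exact ⟨c, t0, rfl⟩
          obtain rfl : x = c := (show c = x by simpa using hT.1).symm
          have ht0 : t0 ≠ [] := by
            rintro rfl
            have hxveq : x = v := by simpa using hT.2.1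
            exact hvx (le_of_eq hxveq.symm)
          have hSne : S ≠ [] := by
            intro h0
            rw [h0] at hS
            exact absurd hS.1 (by simp)
          refine ⟨S ++ t0, ⟨?_, ?_, rising_glue hhf hhg hfg hS.2.1 hS.2.2 hT.2.2 ht0⟩, ?_⟩
          · rw [List.head?_append_of_ne_nil _ hSne]
            exact hS.1
          · rw [List.getLast?_append_of_ne_nil _ ht0]
            have hcc : (x :: t0).getLast? = t0.getLast? := by
              cases t0 with
              | nil => exact absurd rfl ht0
              | cons c cs => rw [List.getLast?_cons_cons]
            rw [← hcc]
            exact hT.2.1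
          · rintro l ⟨h1, h2, h3⟩
            obtain ⟨s, t, rfl, hs1, hs2, ht1, ht2, hrs, hrt⟩ :=
              rising_split hcov hhf hhg h3 h1 h2 hux hvx
            have hsS : s = S := hSu s ⟨hs1, hs2, hrs⟩
            have htT : x :: t = x :: t0 := hTu (x :: t) ⟨List.head?_cons, ht2, hrt⟩
            obtain rfl : t = t0 := by injection htT
            rw [hsS]
    · -- lexicographically smallest
      intro u v _ huv _ l h1 h2 h3 x₁ hx₁ z huz hzv hne
      obtain ⟨l₂, rfl⟩ : ∃ l₂, l = u :: x₁ :: l₂ := by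
        cases l with
        | nil => simp at h1
        | cons a l' =>
          obtain rfl : u = a := (show a = u by simpa using h1).symm
          cases l' with
          | nil => simp at hx₁
          | cons b l₂ =>
            obtain rfl : x₁ = b := (show b = x₁ by simpa using hx₁).symm
            exact ⟨l₂, rfl⟩
      have hux₁ : u ⋖ x₁ := (List.isChain_cons_cons.mp h3.1).1
      by_cases hvx : v ≤ x
      · have hx₁x : x₁ ≤ x :=
          le_trans (mem_le_last (h3.1.imp fun a b hab => hab.lt) h2 x₁ (by simp)) hvx
        rw [hhf u x₁ hx₁x, hhf u z (hzv.trans hvx)]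
        exact hf.2 u v bot_le huv hvx _ h1 h2 ((rising_congr_below hhf h2 hvx).mp h3)
          x₁ hx₁ z huz hzv hne
      · by_cases hxu : x ≤ u
        · have hnx₁ : ¬ x₁ ≤ x := fun hh => hux₁.lt.not_ge (hh.trans hxu)
          have hnz : ¬ z ≤ x := fun hh => huz.lt.not_ge (hh.trans hxu)
          rw [hhg u x₁ hnx₁, hhg u z hnz]
          exact hg.2 u v hxu huv le_top _ h1 h2 ((rising_congr_above hhg h1 hxu).mp h3)
            x₁ hx₁ z huz hzv hne
        · have hux : u ≤ x := (hcomp u).resolve_right hxu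
          have hzx : z ≤ x := (hcov u z huz).resolve_right hxu
          have hx₁x : x₁ ≤ x := (hcov u x₁ hux₁).resolve_right hxu
          obtain ⟨s, t, heq, hs1, hs2, ht1, ht2, hrs, hrt⟩ :=
            rising_split hcov hhf hhg h3 h1 h2 hux hvx
          have hsl : 2 ≤ s.length := by
            cases s with
            | nil => exact absurd hs1 (by simp)
            | cons a s' =>
              cases s' with
              | nil =>
                obtain rfl : u = a := (show a = u by simpa using hs1).symm
                have huxeq : u = x := by simpa using hs2
                exact absurd (le_of_eq huxeq.symm) hxu
              | cons b s'' => simp [List.length_cons]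
          have hs1' : s[1]? = some x₁ := by
            have e : (u :: x₁ :: l₂)[1]? = s[1]? := by
              rw [heq, List.getElem?_append, if_pos (by omega)]
            rw [← e]
            simp
          rw [hhf u x₁ hx₁x, hhf u z hzx]
          exact hf.2 u x bot_le hux le_rfl s hs1 hs2 hrs x₁ hs1' z huz hzx hne
  refine ⟨main _ (fun a b hb => if_pos hb) (fun a b hb => if_neg hb),
    ⟨fun u v => @ite _ (v ≤ x) (Classical.dec _) (f u v) (g u v),
      main _ (fun a b hb => if_pos hb) (fun a b hb => if_neg hb)⟩⟩
end

section
/- Let L be a finite, rank-connected, dismantlable lattice and suppose that for some i with 0 < i < r(⊤) the rank set R_i consists of a single element x. Then the intervals [⊥, x] and [x, ⊤] are each rank-connected and dismantlable lattices. -/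
section RankLemmas
variable {L : Type*} [Lattice L] [Finite L] [BoundedOrder L] {r : L → ℕ}

lemma rank_mono (hr : IsRankFunction L r) : ∀ b a : L, a ≤ b → r a ≤ r b := by
  intro b
  induction b using WellFoundedLT.induction with
  | ind b IH =>
    intro a hab
    rcases eq_or_lt_of_le hab with rfl | hlt
    · exact le_rfl
    · obtain ⟨c, hac, hcb⟩ := exists_le_covBy_of_lt hlt
      have := hr.2 c b hcb
      have h2 := IH c hcb.lt a hac
      omega

lemma rank_strictMono (hr : IsRankFunction L r) {a b : L} (h : a < b) : r a < r b := by
  obtain ⟨c, hac, hcb⟩ := exists_le_covBy_of_lt h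
  have := hr.2 c b hcb
  have := rank_mono hr c a hac
  omega

lemma exists_le_rank (hr : IsRankFunction L r) :
    ∀ v : L, ∀ j, j ≤ r v → ∃ w, w ≤ v ∧ r w = j := by
  intro v
  induction v using WellFoundedLT.induction with
  | ind v IH =>
    intro j hj
    rcases eq_or_lt_of_le hj with rfl | hlt
    · exact ⟨v, le_rfl, rfl⟩
    · have hvbot : (⊥ : L) < v := by
        rcases eq_or_lt_of_le (bot_le (a := v)) with rfl | h
        · have := hr.1; omega
        · exact h
      obtain ⟨u, _, huv⟩ := exists_le_covBy_of_lt hvbot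
      have := hr.2 u v huv
      obtain ⟨w, hwu, hwr⟩ := IH u huv.lt j (by omega)
      exact ⟨w, hwu.trans huv.le, hwr⟩

lemma exists_ge_rank (hr : IsRankFunction L r) :
    ∀ v : L, ∀ j, r v ≤ j → j ≤ r (⊤ : L) → ∃ w, v ≤ w ∧ r w = j := by
  intro v
  induction v using WellFoundedGT.induction with
  | ind v IH =>
    intro j hj hjt
    rcases eq_or_lt_of_le hj with rfl | hlt
    · exact ⟨v, le_rfl, rfl⟩
    · have hvtop : v < (⊤ : L) := by
        rcases eq_or_lt_of_le (le_top (a := v)) with rfl | h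
        · omega
        · exact h
      obtain ⟨w, hvw, _⟩ := exists_covBy_le_of_lt hvtop
      have := hr.2 v w hvw
      obtain ⟨u, hwu, hur⟩ := IH w hvw.lt j (by omega) hjt
      exact ⟨u, hvw.le.trans hwu, hur⟩

lemma rank_unique (hr : IsRankFunction L r) {r' : L → ℕ} (hr' : IsRankFunction L r') :
    r' = r := by
  funext v
  induction v using WellFoundedLT.induction with
  | ind v IH =>
    rcases eq_or_lt_of_le (bot_le (a := v)) with rfl | h
    · rw [hr.1, hr'.1]
    · obtain ⟨u, _, huv⟩ := exists_le_covBy_of_lt h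
      rw [hr.2 u v huv, hr'.2 u v huv, IH u huv.lt]
end RankLemmas

section Transfer
variable {L : Type*} [Lattice L] {a b : L}

lemma icc_covBy_iff {u v : Set.Icc a b} : u ⋖ v ↔ (u : L) ⋖ (v : L) := by
  have h : (Set.range ((OrderEmbedding.subtype (· ∈ Set.Icc a b)) : Set.Icc a b ↪o L)).OrdConnected := by
    convert Set.ordConnected_Icc (a := a) (b := b) using 1
    exact Subtype.range_coe
  exact (Set.OrdConnected.apply_covBy_apply_iff _ h).symm

lemma hasse_icc_connected (S : Set L) (hS : S ⊆ Set.Icc a b)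
    (h : (hasseGraph L S).Connected) :
    (hasseGraph (Set.Icc a b) (Subtype.val ⁻¹' S)).Connected := by
  have e : (hasseGraph (Set.Icc a b) (Subtype.val ⁻¹' S)) ≃g (hasseGraph L S) := by
    refine ⟨⟨fun z => ⟨z.1.1, z.2⟩, fun w => ⟨⟨w.1, hS w.2⟩, w.2⟩, fun z => rfl, fun w => rfl⟩, ?_⟩
    intro z w
    simp only [hasseGraph, Equiv.coe_fn_mk]
    rw [icc_covBy_iff, icc_covBy_iff]
  exact (SimpleGraph.Iso.connected_iff e).mpr h
end Transfer

section Dism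
variable {L : Type*} [Lattice L] [Finite L] {a b : L}

omit [Finite L] in
lemma coe_sup_icc [Fact (a ≤ b)] (z w : Set.Icc a b) :
    ((z ⊔ w : Set.Icc a b) : L) = (z : L) ⊔ (w : L) := rfl
omit [Finite L] in
lemma coe_inf_icc [Fact (a ≤ b)] (z w : Set.Icc a b) :
    ((z ⊓ w : Set.Icc a b) : L) = (z : L) ⊓ (w : L) := rfl

lemma dismantlable_icc [Nonempty L] (hab : a ≤ b) (hd : Dismantlable L) :
    haveI : Fact (a ≤ b) := ⟨hab⟩
    Dismantlable (Set.Icc a b) := by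
  haveI : Fact (a ≤ b) := ⟨hab⟩
  obtain ⟨C, hC, hmono, htop⟩ := hd
  set N := Nat.card L with hN
  have hN1 : 1 ≤ N := Nat.one_le_iff_ne_zero.2 (Nat.card_ne_zero.2 ⟨‹Nonempty L›, ‹Finite L›⟩)
  set M := Nat.card (Set.Icc a b) with hM
  have hMcard : M = (Set.Icc a b).ncard := Nat.card_coe_set_eq _
  set cap : ℕ → ℕ := fun j => min (max 1 j) N with hcap
  set g : ℕ → ℕ := fun j => (C (cap j) ∩ Set.Icc a b).ncard with hg
  have capmono : Monotone cap := fun i j hij => min_le_min (max_le_max le_rfl hij) le_rfl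
  have cap1 : ∀ j, 1 ≤ cap j := fun j => le_min (le_max_left _ _) hN1
  have capN : ∀ j, cap j ≤ N := fun j => min_le_right _ _
  have gmono : Monotone g := fun i j hij =>
    Set.ncard_le_ncard (Set.inter_subset_inter_left _ (hmono _ _ (capmono hij))) (Set.toFinite _)
  have gstep : ∀ j, g (j + 1) ≤ g j + 1 := by
    intro j
    rcases eq_or_lt_of_le (capmono (Nat.le_add_right j 1)) with heq | hlt
    · simp only [hg, ← heq]; omega
    · have hkk : cap (j + 1) = cap j + 1 := by
        have h3 : cap (j + 1) ≤ cap j + 1 := by simp only [hcap]; omega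
        omega
      have hsub : C (cap j) ⊆ C (cap (j + 1)) := hmono _ _ (by omega)
      have hc1 : (C (cap j)).ncard = cap j := (hC _ (cap1 j) (capN j)).2
      have hc2 : (C (cap (j + 1))).ncard = cap (j + 1) := (hC _ (cap1 _) (capN _)).2
      have hdiff : (C (cap (j + 1)) \ C (cap j)).ncard = 1 := by
        rw [Set.ncard_diff hsub (Set.toFinite _), hc1, hc2]; omega
      have hsub2 : C (cap (j + 1)) ∩ Set.Icc a b ⊆
          (C (cap j) ∩ Set.Icc a b) ∪ (C (cap (j + 1)) \ C (cap j)) := by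
        rintro z ⟨hz1, hz2⟩
        by_cases hz : z ∈ C (cap j)
        · exact Or.inl ⟨hz, hz2⟩
        · exact Or.inr ⟨hz1, hz⟩
      have hle := Set.ncard_union_le (C (cap j) ∩ Set.Icc a b) (C (cap (j + 1)) \ C (cap j))
      have hle2 := Set.ncard_le_ncard hsub2 (Set.toFinite _)
      simp only [hg]
      omega
  have gN : g N = M := by
    have hcN : cap N = N := by simp only [hcap]; omega
    simp only [hg, hcN, htop, Set.univ_inter]
    omega
  have g01 : g 0 = g 1 := by
    have : cap 0 = cap 1 := by simp only [hcap]; norm_num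
    simp only [hg, this]
  have g0 : g 0 ≤ 1 := by
    have hc0 : cap 1 = 1 := by simp only [hcap]; omega
    have : g 1 ≤ (C 1).ncard := by
      simp only [hg, hc0]
      exact Set.ncard_le_ncard Set.inter_subset_left (Set.toFinite _)
    have h1 := (hC 1 le_rfl hN1).2
    omega
  set f : ℕ → ℕ := fun k => sInf {j | k ≤ g j} with hf
  have hfmem : ∀ k, k ≤ M → k ≤ g (f k) := by
    intro k hk
    exact Nat.sInf_mem (⟨N, by simp only [Set.mem_setOf_eq, gN]; exact hk⟩ : {j | k ≤ g j}.Nonempty)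
  have hfeq : ∀ k, 1 ≤ k → k ≤ M → g (f k) = k := by
    intro k hk1 hk2
    refine le_antisymm ?_ (hfmem k hk2)
    rcases Nat.eq_zero_or_pos (f k) with h0 | hpos
    · rw [h0]; omega
    · have hmnot : f k - 1 ∉ {j | k ≤ g j} := Nat.notMem_of_lt_sInf (show f k - 1 < f k by omega)
      simp only [Set.mem_setOf_eq, not_le] at hmnot
      have hstep := gstep (f k - 1)
      have hsucc : f k - 1 + 1 = f k := Nat.succ_pred_eq_of_pos hpos
      rw [hsucc] at hstep
      omega
  have hfmono : ∀ k k', k ≤ k' → k' ≤ M → f k ≤ f k' := by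
    intro k k' hkk' hk'
    exact Nat.sInf_le (Set.mem_setOf_eq ▸ le_trans hkk' (hfmem k' hk'))
  refine ⟨fun k => Subtype.val ⁻¹' (C (cap (f (min k M)))), ?_, ?_, ?_⟩
  · intro k hk1 hk2
    rw [← hM] at hk2
    have hmin : min k M = k := min_eq_left hk2
    have hsl := (hC _ (cap1 (f (min k M))) (capN _)).1
    constructor
    · constructor
      · intro z hz w hw
        show ((z ⊔ w : Set.Icc a b) : L) ∈ C (cap (f (min k M)))
        rw [coe_sup_icc]
        exact hsl.1 hz hw
      · intro z hz w hw
        show ((z ⊓ w : Set.Icc a b) : L) ∈ C (cap (f (min k M)))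
        rw [coe_inf_icc]
        exact hsl.2 hz hw
    · show (Subtype.val ⁻¹' (C (cap (f (min k M))))).ncard = k
      have himg : (Subtype.val '' (Subtype.val ⁻¹' (C (cap (f (min k M)))) : Set (Set.Icc a b))) =
          C (cap (f (min k M))) ∩ Set.Icc a b := by
        rw [Set.image_preimage_eq_inter_range, Subtype.range_coe]
      have hinj := Set.ncard_image_of_injective
        ((Subtype.val ⁻¹' (C (cap (f (min k M))))) : Set (Set.Icc a b)) (Subtype.coe_injective)
      rw [himg] at hinj
      rw [← hinj, hmin]
      exact hfeq k hk1 hk2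
  · intro k k' hkk'
    exact Set.preimage_mono
      (hmono _ _ (capmono (hfmono _ _ (min_le_min hkk' le_rfl) (min_le_right _ _))))
  · rw [← hM]
    show Subtype.val ⁻¹' (C (cap (f (min M M)))) = Set.univ
    rw [min_self]
    have hM1 : 1 ≤ M := by
      rw [hM]; exact Nat.one_le_iff_ne_zero.2 (Nat.card_ne_zero.2 ⟨⟨⟨a, le_rfl, hab⟩⟩, inferInstance⟩)
    have key : C (cap (f M)) ∩ Set.Icc a b = Set.Icc a b := by
      apply Set.eq_of_subset_of_ncard_le Set.inter_subset_right _ (Set.toFinite _)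
      have := hfeq M hM1 le_rfl
      simp only [hg] at this
      omega
    ext z
    simp only [Set.mem_preimage, Set.mem_univ, iff_true]
    exact (key.symm ▸ z.2 : (z : L) ∈ C (cap (f M)) ∩ Set.Icc a b).1
end Dism


/-- If some intermediate rank set of a finite rank-connected
dismantlable lattice is a singleton `{x}`, then the intervals `[⊥, x]` and
`[x, ⊤]` are rank-connected and dismantlable lattices. -/
theorem intervals_rankConnected_dismantlable_at_singleton_rank
    (L : Type*) [Lattice L] [Finite L] [BoundedOrder L]
    (hrc : RankConnected L) (hd : Dismantlable L)
    (r : L → ℕ) (hr : IsRankFunction L r)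
    (i : ℕ) (hi0 : 0 < i) (hit : i < r (⊤ : L))
    (x : L) (hx : {v : L | r v = i} = {x}) :
    letI : Fact ((⊥ : L) ≤ x) := ⟨bot_le⟩
    letI : Fact (x ≤ (⊤ : L)) := ⟨le_top⟩
    RankConnected (Set.Icc (⊥ : L) x) ∧ Dismantlable (Set.Icc (⊥ : L) x) ∧
    RankConnected (Set.Icc x (⊤ : L)) ∧ Dismantlable (Set.Icc x (⊤ : L)) := by
  haveI f1 : Fact ((⊥ : L) ≤ x) := ⟨bot_le⟩
  haveI f2 : Fact (x ≤ (⊤ : L)) := ⟨le_top⟩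
  -- basic rank facts
  have hrx : r x = i := by
    have hxm : x ∈ ({x} : Set L) := rfl
    rw [← hx] at hxm
    exact hxm
  have hle_x : ∀ v : L, r v ≤ i → v ≤ x := by
    intro v hv
    obtain ⟨w, hvw, hwr⟩ := exists_ge_rank hr v i hv hit.le
    have hwx : w = x := by
      have : w ∈ {v : L | r v = i} := hwr
      rw [hx] at this
      exact this
    exact hwx ▸ hvw
  have hge_x : ∀ v : L, i ≤ r v → x ≤ v := by
    intro v hv
    obtain ⟨w, hvw, hwr⟩ := exists_le_rank hr v i hv
    have hwx : w = x := by
      have : w ∈ {v : L | r v = i} := hwr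
      rw [hx] at this
      exact this
    exact hwx ▸ hvw
  -- connectivity in terms of r
  obtain ⟨r₀, hr₀, hconn₀⟩ := hrc
  have hr₀r : r₀ = r := rank_unique hr hr₀
  rw [hr₀r] at hconn₀
  have hcbot : ((⊥ : Set.Icc (⊥ : L) x) : L) = ⊥ := rfl
  have hctop : ((⊤ : Set.Icc (⊥ : L) x) : L) = x := rfl
  have hcbot' : ((⊥ : Set.Icc x (⊤ : L)) : L) = x := rfl
  have hctop' : ((⊤ : Set.Icc x (⊤ : L)) : L) = ⊤ := rfl
  refine ⟨?_, dismantlable_icc bot_le hd, ?_, dismantlable_icc le_top hd⟩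
  · -- RankConnected on [⊥, x]
    refine ⟨fun z => r z.1, ⟨?_, ?_⟩, ?_⟩
    · show r ((⊥ : Set.Icc (⊥ : L) x) : L) = 0
      rw [hcbot, hr.1]
    · intro u v huv
      exact hr.2 _ _ (icc_covBy_iff.mp huv)
    · intro j hj
      have hj' : j < r ((⊤ : Set.Icc (⊥ : L) x) : L) := hj
      rw [hctop, hrx] at hj'
      have hS : {v : L | r v = j ∨ r v = j + 1} ⊆ Set.Icc (⊥ : L) x := by
        intro v hv
        have := hj'
        exact ⟨bot_le, hle_x v (by rcases hv with h | h <;> omega)⟩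
      show (hasseGraph (Set.Icc (⊥ : L) x)
        (Subtype.val ⁻¹' {v : L | r v = j ∨ r v = j + 1})).Connected
      exact hasse_icc_connected _ hS (hconn₀ j (by omega))
  · -- RankConnected on [x, ⊤]
    refine ⟨fun z => r z.1 - i, ⟨?_, ?_⟩, ?_⟩
    · show r ((⊥ : Set.Icc x (⊤ : L)) : L) - i = 0
      rw [hcbot', hrx]
      omega
    · intro u v huv
      have hcov := hr.2 _ _ (icc_covBy_iff.mp huv)
      have hiu : i ≤ r u.1 := hrx ▸ rank_mono hr u.1 x u.2.1
      show r (v : L) - i = r (u : L) - i + 1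
      omega
    · intro j hj
      have hj' : j < r ((⊤ : Set.Icc x (⊤ : L)) : L) - i := hj
      rw [hctop'] at hj'
      have hS : {v : L | r v = i + j ∨ r v = i + j + 1} ⊆ Set.Icc x (⊤ : L) := by
        intro v hv
        exact ⟨hge_x v (by rcases hv with h | h <;> omega), le_top⟩
      have hset : {z : Set.Icc x (⊤ : L) | (fun z : Set.Icc x (⊤ : L) => r z.1 - i) z = j ∨
          (fun z : Set.Icc x (⊤ : L) => r z.1 - i) z = j + 1} =
          Subtype.val ⁻¹' {v : L | r v = i + j ∨ r v = i + j + 1} := by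
        ext z
        have hzi : i ≤ r z.1 := hrx ▸ rank_mono hr z.1 x z.2.1
        simp only [Set.mem_setOf_eq, Set.mem_preimage]
        omega
      show (hasseGraph (Set.Icc x (⊤ : L))
        ({z : Set.Icc x (⊤ : L) | (fun z : Set.Icc x (⊤ : L) => r z.1 - i) z = j ∨
          (fun z : Set.Icc x (⊤ : L) => r z.1 - i) z = j + 1})).Connected
      rw [hset]
      exact hasse_icc_connected _ hS (hconn₀ (i + j) (by omega))
end
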